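/- arXiv:1603.06695 — 3 statements merged into one kernel-verified Lean document; each statement's English description precedes it below -/
import Mathlib

section
/- For all d ≥ 1 and r ≥ 1 there exists K such that for all k ≥ K: AR_k^{d+1}(r) ≤ 2_d(k^{r+1}). -/
/-- Tower function: `tower 0 i = i`, `tower (n+1) i = 2 ^ tower n i`. -/
def tower : ℕ → ℕ → ℕ
  | 0, i => i
  | n+1, i => 2 ^ tower n i

/-- `ARProp f d r R` : every `f`-limited colouring `C : {0,…,R}^d → ℕ^r` admits
`x₁ < … < x_{d+1} ≤ R` with `C(x₁,…,x_d) ≤ C(x₂,…,x_{d+1})` coordinatewise. -/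
def ARProp (f : ℕ → ℕ) (d r R : ℕ) : Prop :=
  ∀ C : (Fin d → ℕ) → (Fin r → ℕ),
    (∀ x : Fin d → ℕ, (∀ i, x i ≤ R) → ∀ j, C x j ≤ f (Finset.univ.sup x) + 1) →
    ∃ x : Fin (d+1) → ℕ, StrictMono x ∧ x (Fin.last d) ≤ R ∧
      ∀ j, C (fun i => x i.castSucc) j ≤ C (fun i => x i.succ) j

/-- `ARnum f d r` : the least `R` witnessing the adjacent Ramsey theorem `AR_f^d(r)`. -/
noncomputable def ARnum (f : ℕ → ℕ) (d r : ℕ) : ℕ := sInf {R | ARProp f d r R}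

/-- size requirement for the dimension-reduction -/
def NS (c : ℕ) : ℕ → ℕ → ℕ
  | 0, m => m
  | e+1, m => (2 * c ^ ((NS c e m + 1) ^ e)) ^ (NS c e m + 1)

lemma tower_mono (e : ℕ) {a b : ℕ} (h : a ≤ b) : tower e a ≤ tower e b := by
  induction e with
  | zero => exact h
  | succ n ih => exact Nat.pow_le_pow_right (by norm_num) ih

lemma chain_le {s : ℕ → ℕ} {n : ℕ} (h : ∀ i < n, s i < s (i+1)) :
    ∀ {i j}, i ≤ j → j ≤ n → s i ≤ s j := by
  intro i j hij hjn
  induction j with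
  | zero => simp_all
  | succ j ih =>
    rcases Nat.lt_or_ge i (j+1) with hlt | hge
    · have : s i ≤ s j := ih (by omega) (by omega)
      exact le_of_lt (lt_of_le_of_lt this (h j (by omega)))
    · have : i = j + 1 := by omega
      subst this; rfl

/-- the `(e'+2)`-tuple with head given by `f` on `0..e'` and last entry `t`. -/
def tup (e' : ℕ) (f : ℕ → ℕ) (t : ℕ) : Fin (e'+2) → ℕ :=
  fun i => if (i : ℕ) < e'+1 then f i else t

lemma tup_congr {e' : ℕ} {f g : ℕ → ℕ} {t : ℕ} (h : ∀ i ≤ e', f i = g i) :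
    tup e' f t = tup e' g t := by
  funext i
  unfold tup
  by_cases hi : (i : ℕ) < e'+1
  · simp only [hi, if_true]; exact h i (by omega)
  · simp [hi]

lemma tup_eq {e' t : ℕ} {f : ℕ → ℕ} {x : Fin (e'+2) → ℕ}
    (hh : ∀ i : Fin (e'+2), (i:ℕ) ≤ e' → f i = x i) (ht : x (Fin.last (e'+1)) = t) :
    x = tup e' f t := by
  funext i
  unfold tup
  by_cases hi : (i : ℕ) < e'+1
  · simp only [hi, if_true]; exact (hh i (by omega)).symm
  · simp only [hi, if_false]
    have : i = Fin.last (e'+1) := by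
      apply Fin.ext; simp [Fin.last]; omega
    rw [this, ht]

theorem stepAux (e' : ℕ) (α : Type) [Fintype α] [Nonempty α]
    (C : (Fin (e'+2) → ℕ) → α) (mtot : ℕ) :
    ∀ (m p : ℕ) (w : ℕ → ℕ) (L : Finset ℕ),
    p + m ≤ mtot →
    (∀ i j, i < j → j < p → w i < w j) →
    (∀ t ∈ L, ∀ i < p, w i < t) →
    (∀ s : ℕ → ℕ, (∀ i < e', s i < s (i+1)) → s e' < p →
      ∀ u₁ u₂, (u₁ ∈ L ∨ ∃ j, s e' < j ∧ j < p ∧ u₁ = w j) →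
               (u₂ ∈ L ∨ ∃ j, s e' < j ∧ j < p ∧ u₂ = w j) →
      C (tup e' (fun i => w (s i)) u₁) = C (tup e' (fun i => w (s i)) u₂)) →
    (2 * Fintype.card α ^ mtot ^ e') ^ m ≤ L.card →
    ∃ z : ℕ → ℕ,
      (∀ n < p, z n = w n) ∧
      (∀ i j, i < j → j < p + m → z i < z j) ∧
      (∀ n, p ≤ n → n < p + m → z n ∈ L) ∧
      (∀ s : ℕ → ℕ, (∀ i < e', s i < s (i+1)) →
        ∀ j₁ j₂, s e' < j₁ → j₁ < p + m → s e' < j₂ → j₂ < p + m →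
        C (tup e' (fun i => z (s i)) (z j₁)) = C (tup e' (fun i => z (s i)) (z j₂))) := by
  classical
  intro m
  induction m with
  | zero =>
    intro p w L h1 h2 h3 h4 h5
    refine ⟨w, fun n _ => rfl, by simpa using h2, by omega, ?_⟩
    intro s hs j₁ j₂ hj₁ hj₁p hj₂ hj₂p
    exact h4 s hs (by omega) (w j₁) (w j₂) (Or.inr ⟨j₁, hj₁, by omega, rfl⟩)
      (Or.inr ⟨j₂, hj₂, by omega, rfl⟩)
  | succ m ih =>
    intro p w L h1 h2 h3 h4 h5
    set Q : ℕ := Fintype.card α ^ mtot ^ e' with hQdef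
    have hQ1 : 1 ≤ Q := Nat.one_le_iff_ne_zero.2 (by positivity)
    have hcard1 : Q * (2*Q) ^ m + 1 ≤ L.card := by
      calc Q * (2*Q) ^ m + 1 ≤ Q * (2*Q) ^ m + Q * (2*Q) ^ m := by
            have : 1 ≤ Q * (2*Q)^m := Nat.one_le_iff_ne_zero.2 (by positivity)
            omega
        _ = (2*Q) ^ (m+1) := by ring
        _ ≤ L.card := h5
    have hLne : L.Nonempty := Finset.card_pos.1 (by omega)
    set b : ℕ := L.min' hLne with hbdef
    have hbL : b ∈ L := L.min'_mem hLne
    set w' : ℕ → ℕ := fun n => if n = p then b else w n with hw'def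
    have hw'p : w' p = b := by simp [hw'def]
    have hw'lt : ∀ n, n ≠ p → w' n = w n := by intro n h; simp [hw'def, h]
    set F : ℕ → ((Fin e' → Fin mtot) → α) := fun t g =>
      C (tup e' (fun i => if h : i < e' then w (g ⟨i, h⟩) else b) t) with hFdef
    -- pigeonhole on the erased set
    have hcard2 : (Finset.univ : Finset ((Fin e' → Fin mtot) → α)).card * (2*Q)^m
        ≤ (L.erase b).card := by
      rw [Finset.card_erase_of_mem hbL]
      have : (Finset.univ : Finset ((Fin e' → Fin mtot) → α)).card = Q := by
        rw [Finset.card_univ, Fintype.card_fun, Fintype.card_fun, Fintype.card_fin,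
          Fintype.card_fin]
      rw [this]; omega
    obtain ⟨y, -, hy⟩ := Finset.exists_le_card_fiber_of_mul_le_card_of_maps_to
      (fun a _ => Finset.mem_univ (F a)) ⟨F b, Finset.mem_univ _⟩ hcard2
    set L₁ : Finset ℕ := (L.erase b).filter (fun x => F x = y) with hL₁def
    have hL₁sub : ∀ t ∈ L₁, t ∈ L ∧ b < t := by
      intro t ht
      have ht' := Finset.mem_of_mem_filter t ht
      have htL : t ∈ L := Finset.mem_of_mem_erase ht'
      exact ⟨htL, lt_of_le_of_ne (L.min'_le t htL) (Ne.symm (Finset.ne_of_mem_erase ht'))⟩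
    have hL₁F : ∀ t ∈ L₁, F t = y := fun t ht => (Finset.mem_filter.1 ht).2
    -- invariant for the extended prefix
    have h4' : ∀ s : ℕ → ℕ, (∀ i < e', s i < s (i+1)) → s e' < p+1 →
      ∀ u₁ u₂, (u₁ ∈ L₁ ∨ ∃ j, s e' < j ∧ j < p+1 ∧ u₁ = w' j) →
               (u₂ ∈ L₁ ∨ ∃ j, s e' < j ∧ j < p+1 ∧ u₂ = w' j) →
      C (tup e' (fun i => w' (s i)) u₁) = C (tup e' (fun i => w' (s i)) u₂) := by
      intro s hs hse u₁ u₂ hu₁ hu₂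
      have hsival : ∀ i, i ≤ e' → s i ≤ s e' := fun i hi => chain_le hs hi le_rfl
      rcases Nat.lt_or_ge (s e') p with hsp | hsp
      · -- old tuples: use h4
        have hcong : ∀ u, tup e' (fun i => w' (s i)) u = tup e' (fun i => w (s i)) u := by
          intro u
          apply tup_congr; intro i hi
          have : s i < p := lt_of_le_of_lt (hsival i hi) hsp
          exact hw'lt _ (by omega)
        have hu : ∀ u, (u ∈ L₁ ∨ ∃ j, s e' < j ∧ j < p+1 ∧ u = w' j) →
            (u ∈ L ∨ ∃ j, s e' < j ∧ j < p ∧ u = w j) := by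
          rintro u (huL | ⟨j, hj1, hj2, rfl⟩)
          · exact Or.inl (hL₁sub u huL).1
          · rcases Nat.lt_or_ge j p with hjp | hjp
            · exact Or.inr ⟨j, hj1, hjp, by rw [hw'lt _ (by omega)]⟩
            · have hjep : j = p := by omega
              refine Or.inl ?_
              rw [hjep, hw'p]; exact hbL
        rw [hcong u₁, hcong u₂]
        exact h4 s hs hsp u₁ u₂ (hu u₁ hu₁) (hu u₂ hu₂)
      · -- new tuples: use the fiber
        have hsep : s e' = p := by omega
        have hu : ∀ u, (u ∈ L₁ ∨ ∃ j, s e' < j ∧ j < p+1 ∧ u = w' j) → u ∈ L₁ := by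
          rintro u (huL | ⟨j, hj1, hj2, rfl⟩)
          · exact huL
          · omega
        have hg : ∀ i : Fin e', s i < mtot := by
          intro i
          have h1' : s (i:ℕ) < s e' :=
            lt_of_lt_of_le (hs i i.2) (chain_le hs (Nat.succ_le_of_lt i.2) le_rfl)
          omega
        set g : Fin e' → Fin mtot := fun i => ⟨s i, hg i⟩ with hgdef
        have hcong : ∀ t, tup e' (fun i => w' (s i)) t
            = tup e' (fun i => if h : i < e' then w ((g ⟨i, h⟩ : Fin mtot) : ℕ) else b) t := by
          intro t; apply tup_congr; intro i hi
          rcases Nat.lt_or_ge i e' with h | h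
          · have hlt : s i < s e' :=
              lt_of_lt_of_le (hs i h) (chain_le hs (Nat.succ_le_of_lt h) le_rfl)
            rw [dif_pos h, hgdef]
            exact hw'lt _ (by omega)
          · have hie : i = e' := by omega
            rw [dif_neg (by omega), hie, hsep, hw'p]
        have h₁ := hL₁F u₁ (hu u₁ hu₁)
        have h₂ := hL₁F u₂ (hu u₂ hu₂)
        rw [hcong u₁, hcong u₂]
        exact congrFun (h₁.trans h₂.symm) g
    -- apply the induction hypothesis
    have h2' : ∀ i j, i < j → j < p+1 → w' i < w' j := by
      intro i j hij hj
      rcases Nat.lt_or_ge j p with hjp | hjp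
      · rw [hw'lt i (by omega), hw'lt j (by omega)]
        exact h2 i j hij hjp
      · have : j = p := by omega
        rw [this, hw'p, hw'lt i (by omega)]
        exact h3 b hbL i (by omega)
    have h3' : ∀ t ∈ L₁, ∀ i < p+1, w' i < t := by
      intro t ht i hi
      obtain ⟨htL, hbt⟩ := hL₁sub t ht
      rcases Nat.lt_or_ge i p with hip | hip
      · rw [hw'lt i (by omega)]; exact h3 t htL i hip
      · have : i = p := by omega
        rw [this, hw'p]; exact hbt
    obtain ⟨z, hz1, hz2, hz3, hz4⟩ := ih (p+1) w' L₁ (by omega) h2' h3' h4' hy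
    refine ⟨z, ?_, ?_, ?_, ?_⟩
    · intro n hn
      rw [hz1 n (by omega)]
      exact hw'lt n (by omega)
    · intro i j hij hj; exact hz2 i j hij (by omega)
    · intro n hn1 hn2
      rcases Nat.lt_or_ge n (p+1) with hnp | hnp
      · have hnep : n = p := by omega
        rw [hz1 n (by omega), hnep, hw'p]
        exact hbL
      · exact (hL₁sub _ (hz3 n hnp (by omega))).1
    · intro s hs j₁ j₂ a1 a2 a3 a4
      exact hz4 s hs j₁ j₂ a1 (by omega) a3 (by omega)

theorem reduce (α : Type) [Fintype α] [Nonempty α] :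
    ∀ (Dm : ℕ) (C : (Fin (Dm+1) → ℕ) → α) (m : ℕ) (L : Finset ℕ),
    NS (Fintype.card α) Dm m ≤ L.card →
    ∃ z : ℕ → ℕ, (∀ i j, i < j → j < m → z i < z j) ∧ (∀ n < m, z n ∈ L) ∧
      ∃ Dc : ℕ → α, ∀ s : ℕ → ℕ, (∀ i < Dm, s i < s (i+1)) → s Dm < m →
        C (fun i : Fin (Dm+1) => z (s (i:ℕ))) = Dc (s 0) := by
  classical
  intro Dm
  induction Dm with
  | zero =>
    intro C m L hc
    simp only [NS] at hc
    obtain ⟨T, hTL, hT⟩ := L.exists_subset_card_eq hc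
    set z : ℕ → ℕ := fun n => if h : n < m then (T.orderEmbOfFin hT) ⟨n, h⟩ else 0 with hz
    refine ⟨z, ?_, ?_, fun n => C (fun _ => z n), ?_⟩
    · intro i j hij hj
      rw [hz]
      simp only [dif_pos (by omega : i < m), dif_pos hj]
      exact (T.orderEmbOfFin hT).strictMono (by exact_mod_cast hij)
    · intro n hn
      rw [hz]
      simp only [dif_pos hn]
      exact hTL (T.orderEmbOfFin_mem hT _)
    · intro s hs hsm
      have : (fun i : Fin 1 => z (s (i:ℕ))) = fun _ : Fin 1 => z (s 0) := by
        funext i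
        have : i = 0 := Subsingleton.elim _ _
        rw [this]; simp
      rw [this]
  | succ e' ih =>
    intro C m L hc
    set c : ℕ := Fintype.card α with hcdef
    set T : ℕ := NS c e' m + 1 with hTdef
    have hT1 : 1 ≤ T := by omega
    obtain ⟨z, -, hz2, hz3, hz4⟩ := stepAux e' α C T T 0 (fun _ => 0) L
      (by omega) (by omega) (by omega) (by intro s _ h; omega)
      (by simpa [NS, hTdef] using hc)
    simp only [Nat.zero_add] at hz2 hz3 hz4
    set M : ℕ := z (T-1) with hMdef
    set L' : Finset ℕ := (Finset.range (T-1)).image z with hL'def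
    have hzinj : Set.InjOn z (Finset.range (T-1)) := by
      intro a ha b hb hab
      simp only [Finset.coe_range, Set.mem_Iio] at ha hb
      by_contra hne
      rcases Nat.lt_or_ge a b with h | h
      · exact absurd hab (Nat.ne_of_lt (hz2 a b h (by omega)))
      · have : b < a := by omega
        exact absurd hab.symm (Nat.ne_of_lt (hz2 b a this (by omega)))
    have hL'card : NS c e' m ≤ L'.card := by
      rw [hL'def, Finset.card_image_of_injOn hzinj, Finset.card_range]
      omega
    set C' : (Fin (e'+1) → ℕ) → α := fun x =>
      C (tup e' (fun n => if h : n < e'+1 then x ⟨n, h⟩ else 0) M) with hC'def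
    obtain ⟨z', hm1, hm2, Dc, hDc⟩ := ih C' m L' hL'card
    have hmem : ∀ n < m, ∃ j, j < T - 1 ∧ z j = z' n := by
      intro n hn
      have := hm2 n hn
      rw [hL'def] at this
      obtain ⟨j, hj, hjz⟩ := Finset.mem_image.1 this
      exact ⟨j, by simpa using hj, hjz⟩
    refine ⟨z', hm1, ?_, Dc, ?_⟩
    · intro n hn
      obtain ⟨j, hj, hjz⟩ := hmem n hn
      rw [← hjz]
      exact hz3 j (by omega) (by omega)
    · intro s hs hsm
      -- indices of the z'-values inside z
      have hsv : ∀ i, i ≤ e'+1 → s i < m := fun i hi =>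
        lt_of_le_of_lt (chain_le hs hi le_rfl) hsm
      have hchoice : ∀ i, ∃ j, (i ≤ e'+1 → j < T - 1 ∧ z j = z' (s i)) := by
        intro i
        by_cases hi : i ≤ e'+1
        · obtain ⟨j, h1, h2⟩ := hmem (s i) (hsv i hi)
          exact ⟨j, fun _ => ⟨h1, h2⟩⟩
        · exact ⟨0, fun h => absurd h hi⟩
      choose σ hσ using hchoice
      have hσlt : ∀ i, i ≤ e'+1 → σ i < T - 1 := fun i hi => (hσ i hi).1
      have hσz : ∀ i, i ≤ e'+1 → z (σ i) = z' (s i) := fun i hi => (hσ i hi).2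
      -- z reflects order on [0,T)
      have hrefl : ∀ a b, a < T → b < T → z a < z b → a < b := by
        intro a b ha hb hab
        by_contra hge
        rcases Nat.lt_or_ge b a with h | h
        · exact absurd (hz2 b a h ha) (by omega)
        · have hab' : a = b := by omega
          rw [hab'] at hab
          exact lt_irrefl _ hab
      have hσinc : ∀ i < e', σ i < σ (i+1) := by
        intro i hi
        apply hrefl _ _ (by have := hσlt i (by omega); omega)
          (by have := hσlt (i+1) (by omega); omega)
        rw [hσz i (by omega), hσz (i+1) (by omega)]
        have h1 : s i < s (i+1) := hs i (by omega)
        exact hm1 _ _ h1 (hsv (i+1) (by omega))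
      have hσe : σ e' < T - 1 := hσlt e' (by omega)
      have hze' : z' (s e') < z' (s (e'+1)) := hm1 _ _ (hs e' (by omega)) (hsv (e'+1) le_rfl)
      have hj₁ : σ (e'+1) < T - 1 := hσlt (e'+1) le_rfl
      have hσej : σ e' < σ (e'+1) := by
        apply hrefl _ _ (by omega) (by omega)
        rw [hσz e' (by omega), hσz (e'+1) le_rfl]
        exact hze'
      -- main chain of equalities
      have e1 : (fun i : Fin (e'+2) => z' (s (i:ℕ)))
          = tup e' (fun n => z' (s n)) (z' (s (e'+1))) := by
        apply tup_eq
        · intro i _; rfl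
        · simp [Fin.last]
      have e2 : ∀ t, tup e' (fun n => z' (s n)) t = tup e' (fun n => z (σ n)) t := by
        intro t; apply tup_congr; intro i hi
        exact (hσz i (by omega)).symm
      have e3 : C (tup e' (fun n => z (σ n)) (z (σ (e'+1))))
          = C (tup e' (fun n => z (σ n)) (z (T-1))) := by
        apply hz4 σ hσinc
        · exact hσej
        · omega
        · omega
        · omega
      have e4 : tup e' (fun n => z' (s n)) M
          = tup e' (fun n => if h : n < e'+1 then
              ((fun i : Fin (e'+1) => z' (s (i:ℕ))) ⟨n, h⟩) else 0) M := by
        apply tup_congr; intro i hi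
        rw [dif_pos (by omega : i < e'+1)]
      calc C (fun i : Fin (e'+2) => z' (s (i:ℕ)))
          = C (tup e' (fun n => z' (s n)) (z' (s (e'+1)))) := by rw [e1]
        _ = C (tup e' (fun n => z (σ n)) (z (σ (e'+1)))) := by
              rw [e2, hσz (e'+1) le_rfl]
        _ = C (tup e' (fun n => z (σ n)) (z (T-1))) := e3
        _ = C (tup e' (fun n => z' (s n)) M) := by rw [← hMdef, ← e2]
        _ = C' (fun i : Fin (e'+1) => z' (s (i:ℕ))) := by rw [hC'def, e4]
        _ = Dc (s 0) := hDc s (fun i hi => hs i (by omega)) (hsv e' (by omega))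

lemma sq_le_two_pow : ∀ x : ℕ, 4 ≤ x → x * x ≤ 2 ^ x := by
  intro x hx
  induction x, hx using Nat.le_induction with
  | base => norm_num
  | succ x hx ih =>
    have h1 : 2*x + 1 ≤ x*x := by nlinarith
    have h2 : 2^(x+1) = 2^x + 2^x := by rw [pow_succ]; ring
    nlinarith

lemma log_le_sqrt (k : ℕ) (hk : 1 ≤ k) : Nat.log 2 k ≤ Nat.sqrt k + 4 := by
  by_cases h : Nat.log 2 k ≤ 4
  · omega
  · have h2 : 2 ^ Nat.log 2 k ≤ k := Nat.pow_log_le_self 2 (by omega)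
    have h3 : Nat.log 2 k * Nat.log 2 k ≤ 2 ^ Nat.log 2 k := sq_le_two_pow _ (by omega)
    have : Nat.log 2 k ≤ Nat.sqrt k := Nat.le_sqrt.2 (le_trans h3 h2)
    omega

lemma NS_lb (c m : ℕ) (hc : 1 ≤ c) : ∀ e, m ≤ NS c e m := by
  intro e
  induction e with
  | zero => simp [NS]
  | succ e ih =>
    have h1 : 2 ≤ 2 * c ^ ((NS c e m + 1)^e) := by
      have : 1 ≤ c ^ ((NS c e m + 1)^e) := Nat.one_le_pow _ _ (by omega)
      omega
    have h2 : 2 ^ (NS c e m + 1) ≤ NS c (e+1) m := by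
      show 2 ^ (NS c e m + 1) ≤ (2 * c ^ ((NS c e m + 1)^e))^(NS c e m + 1)
      exact Nat.pow_le_pow_left h1 _
    have h3 : NS c e m + 1 < 2 ^ (NS c e m + 1) := Nat.lt_two_pow_self
    omega

lemma NS_succ_le (c lam m e : ℕ) (hc : c ≤ 2 ^ lam) :
    NS c (e+1) m + 1 ≤ 2 ^ ((lam + 2) * (NS c e m + 1)^(e+1)) := by
  set T := NS c e m + 1 with hT
  have hT1 : 1 ≤ T := by omega
  have h0 : NS c (e+1) m = (2 * c ^ (T^e))^T := by simp [NS, hT]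
  have h3 : (1 + lam * T^e)*T ≤ (lam+1) * T^(e+1) := by
    have hTT : T ≤ T^(e+1) := Nat.le_self_pow (by omega) _
    have he : T^e * T = T^(e+1) := by rw [← pow_succ]
    calc (1 + lam*T^e)*T = T + lam * (T^e * T) := by ring
      _ = T + lam * T^(e+1) := by rw [he]
      _ ≤ T^(e+1) + lam * T^(e+1) := by omega
      _ = (lam+1) * T^(e+1) := by ring
  have h4 : NS c (e+1) m ≤ 2 ^ ((lam+1) * T^(e+1)) := by
    rw [h0]
    calc (2 * c ^ (T^e))^T ≤ (2 ^ (1 + lam * T^e))^T := by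
          apply Nat.pow_le_pow_left
          calc 2 * c^(T^e) ≤ 2 * (2^lam)^(T^e) :=
                Nat.mul_le_mul_left _ (Nat.pow_le_pow_left hc _)
            _ = 2^(1 + lam * T^e) := by rw [← pow_mul, pow_add, pow_one]
      _ = 2 ^ ((1 + lam * T^e)*T) := by rw [← pow_mul]
      _ ≤ 2 ^ ((lam+1) * T^(e+1)) := Nat.pow_le_pow_right (by norm_num) h3
  have h5 : (lam+1)*T^(e+1) + 1 ≤ (lam+2)*T^(e+1) := by
    have h6 : 1 ≤ T^(e+1) := Nat.one_le_pow _ _ (by omega)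
    have h7 : (lam+2)*T^(e+1) = (lam+1)*T^(e+1) + T^(e+1) := by ring
    omega
  have h8 : 1 ≤ 2^((lam+1)*T^(e+1)) := Nat.one_le_two_pow
  have h9 : 2^((lam+1)*T^(e+1) + 1) = 2^((lam+1)*T^(e+1)) + 2^((lam+1)*T^(e+1)) := by
    rw [pow_succ]; ring
  calc NS c (e+1) m + 1 ≤ 2^((lam+1)*T^(e+1)) + 1 := by omega
    _ ≤ 2^((lam+1)*T^(e+1) + 1) := by omega
    _ ≤ 2^((lam+2)*T^(e+1)) := Nat.pow_le_pow_right (by norm_num) h5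

lemma arith (d r : ℕ) (hd : 1 ≤ d) (hr : 1 ≤ r) :
    ∃ K : ℕ, ∀ k, K ≤ k → NS ((k+2)^r) d ((k+2)^r + 1 + d) ≤ tower d (k ^ (r+1)) := by
  set A := (d+3) * ((r+1) * (2^r + d + 2)) with hA
  have hA1 : 1 ≤ A := Nat.one_le_iff_ne_zero.2 (by positivity)
  refine ⟨(2*A+6)*(2*A+6) + 2, ?_⟩
  intro k hk
  have hk2 : 2 ≤ k := by nlinarith
  have hsq : 2*A + 6 ≤ Nat.sqrt k := Nat.le_sqrt.2 (le_trans (Nat.le_add_right _ 2) hk)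
  set lam := Nat.clog 2 (k+2) with hlamdef
  set B := r * lam + 2 with hB
  set c := (k+2)^r with hc
  set m := c + 1 + d with hm
  have hc1 : 1 ≤ c := Nat.one_le_pow _ _ (by omega)
  have hc2 : c ≤ 2 ^ (r * lam) := by
    have h1 : k + 2 ≤ 2 ^ lam := Nat.le_pow_clog (by norm_num) _
    calc c ≤ (2^lam)^r := Nat.pow_le_pow_left h1 _
      _ = 2^(r * lam) := by rw [← pow_mul, mul_comm]
  have hT0 : NS c 0 m = m := by simp [NS]
  have hd3 : ∀ e, d + 3 ≤ NS c e m + 1 := by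
    intro e
    have := NS_lb c m hc1 e
    omega
  -- KEY inequality
  have hlog : Nat.log 2 k ≤ Nat.sqrt k + 4 := log_le_sqrt k (by omega)
  have hclog : lam ≤ Nat.log 2 k + 2 := by
    have h1 : k < 2 ^ (Nat.log 2 k + 1) := Nat.lt_pow_succ_log_self (by norm_num) k
    have h2 : 2^(Nat.log 2 k + 2) = 2^(Nat.log 2 k + 1) + 2^(Nat.log 2 k + 1) := by
      rw [pow_succ]; ring
    have h3 : (2:ℕ) ≤ 2 ^ (Nat.log 2 k + 1) := by
      calc (2:ℕ) = 2^1 := by norm_num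
        _ ≤ 2^(Nat.log 2 k + 1) := Nat.pow_le_pow_right (by norm_num) (by omega)
    exact (Nat.clog_le_iff_le_pow (by norm_num)).2 (by omega)
  have hlam : lam ≤ Nat.sqrt k + 6 := by omega
  have hBle : B ≤ (r+1) * (Nat.sqrt k + 6) := by
    have h1 : r * lam ≤ r * (Nat.sqrt k + 6) := Nat.mul_le_mul_left _ hlam
    have h2 : (r+1) * (Nat.sqrt k + 6) = r * (Nat.sqrt k + 6) + (Nat.sqrt k + 6) := by ring
    omega
  have hckr : c ≤ 2^r * k^r := by
    calc c ≤ (2*k)^r := Nat.pow_le_pow_left (by omega) _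
      _ = 2^r * k^r := by rw [mul_pow]
  have hkr1 : 1 ≤ k^r := Nat.one_le_pow _ _ (by omega)
  have hm1 : m + 1 ≤ (2^r + d + 2) * k^r := by
    have h1 : (2^r + d + 2) * k^r = 2^r * k^r + (d+2) * k^r := by ring
    have h2 : d + 2 ≤ (d+2) * k^r := Nat.le_mul_of_pos_right _ (by omega)
    omega
  have KEY : (d+3) * (B * (m+1)) ≤ k^(r+1) := by
    have hs6 : 6 ≤ Nat.sqrt k := by omega
    have h2A : 2*A ≤ Nat.sqrt k := by omega
    have hsqk : Nat.sqrt k * Nat.sqrt k ≤ k := by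
      have := Nat.sqrt_le' k
      nlinarith [this]
    calc (d+3) * (B * (m+1))
        ≤ (d+3) * (((r+1)*(Nat.sqrt k+6)) * ((2^r+d+2)*k^r)) :=
          Nat.mul_le_mul_left _ (Nat.mul_le_mul hBle hm1)
      _ = (A * (Nat.sqrt k + 6)) * k^r := by rw [hA]; ring
      _ ≤ (A * (2 * Nat.sqrt k)) * k^r := by
          apply Nat.mul_le_mul_right
          apply Nat.mul_le_mul_left
          omega
      _ = ((2*A) * Nat.sqrt k) * k^r := by ring
      _ ≤ (Nat.sqrt k * Nat.sqrt k) * k^r := by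
          apply Nat.mul_le_mul_right
          exact Nat.mul_le_mul_right _ h2A
      _ ≤ k * k^r := Nat.mul_le_mul_right _ hsqk
      _ = k^(r+1) := by rw [pow_succ]; ring
  -- the invariant
  have hstep : ∀ e, NS c (e+1) m + 1 ≤ 2 ^ (B * (NS c e m + 1)^(e+1)) := by
    intro e
    have := NS_succ_le c (r*lam) m e hc2
    simpa [hB] using this
  have hB2 : B ≤ 2^B := (Nat.lt_two_pow_self (n := B)).le
  have I : ∀ e, 1 ≤ e → e ≤ d → B * (NS c e m + 1)^(d+2) ≤ tower e (k^(r+1)) := by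
    intro e he1
    induction e, he1 using Nat.le_induction with
    | base =>
      intro _
      have h1 : NS c 1 m + 1 ≤ 2 ^ (B * (m+1)) := by
        have := hstep 0
        rw [hT0] at this
        simpa using this
      have h2 : B * (NS c 1 m + 1)^(d+2) ≤ B * 2^(B*(m+1)*(d+2)) := by
        apply Nat.mul_le_mul_left
        calc (NS c 1 m + 1)^(d+2) ≤ (2^(B*(m+1)))^(d+2) := Nat.pow_le_pow_left h1 _
          _ = 2^(B*(m+1)*(d+2)) := by rw [← pow_mul]
      have h3 : B * 2^(B*(m+1)*(d+2)) ≤ 2^(B + B*(m+1)*(d+2)) := by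
        rw [pow_add]
        exact Nat.mul_le_mul_right _ hB2
      have h4 : B + B*(m+1)*(d+2) ≤ (d+3) * (B * (m+1)) := by
        have hd1 : (d+3) * (B*(m+1)) = B*(m+1)*(d+2) + B*(m+1) := by ring
        have hd2 : B ≤ B*(m+1) := Nat.le_mul_of_pos_right _ (by omega)
        omega
      have h5 : tower 1 (k^(r+1)) = 2^(k^(r+1)) := by simp [tower]
      rw [h5]
      calc B * (NS c 1 m + 1)^(d+2) ≤ 2^(B + B*(m+1)*(d+2)) := le_trans h2 h3
        _ ≤ 2^((d+3) * (B * (m+1))) := Nat.pow_le_pow_right (by norm_num) h4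
        _ ≤ 2^(k^(r+1)) := Nat.pow_le_pow_right (by norm_num) KEY
    | succ e he ih =>
      intro hed
      have ihe := ih (by omega)
      set T := NS c e m + 1 with hTe
      have hT1 : 1 ≤ T := by omega
      have h1 : NS c (e+1) m + 1 ≤ 2 ^ (B * T^(e+1)) := hstep e
      have h2 : B * (NS c (e+1) m + 1)^(d+2) ≤ B * 2^(B*T^(e+1)*(d+2)) := by
        apply Nat.mul_le_mul_left
        calc (NS c (e+1) m + 1)^(d+2) ≤ (2^(B*T^(e+1)))^(d+2) := Nat.pow_le_pow_left h1 _
          _ = 2^(B*T^(e+1)*(d+2)) := by rw [← pow_mul]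
      have h3 : B * 2^(B*T^(e+1)*(d+2)) ≤ 2^(B + B*T^(e+1)*(d+2)) := by
        set E := B*T^(e+1)*(d+2) with hE
        rw [pow_add]
        exact Nat.mul_le_mul_right _ hB2
      have h4 : B + B*T^(e+1)*(d+2) ≤ B * T^(e+1) * (d+3) := by
        have hd1 : B*T^(e+1)*(d+3) = B*T^(e+1)*(d+2) + B*T^(e+1) := by ring
        have hd2 : B ≤ B*T^(e+1) := Nat.le_mul_of_pos_right _ (Nat.one_le_pow _ _ (by omega))
        omega
      have h5 : B * T^(e+1) * (d+3) ≤ B * T^(e+2) := by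
        have hp : T^(e+2) = T^(e+1) * T := by rw [← pow_succ]
        have hdT : d + 3 ≤ T := hd3 e
        calc B * T^(e+1) * (d+3) ≤ B * T^(e+1) * T := Nat.mul_le_mul_left _ hdT
          _ = B * T^(e+2) := by rw [hp]; ring
      have h6 : B * T^(e+2) ≤ B * T^(d+2) := by
        apply Nat.mul_le_mul_left
        exact Nat.pow_le_pow_right (by omega) (by omega)
      have h7 : tower (e+1) (k^(r+1)) = 2^(tower e (k^(r+1))) := by simp [tower]
      rw [h7]
      calc B * (NS c (e+1) m + 1)^(d+2) ≤ 2^(B + B*T^(e+1)*(d+2)) := le_trans h2 h3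
        _ ≤ 2^(B * T^(d+2)) := Nat.pow_le_pow_right (by norm_num) (by omega)
        _ ≤ 2^(tower e (k^(r+1))) := Nat.pow_le_pow_right (by norm_num) ihe
  have hId := I d hd le_rfl
  have hfin : NS c d m ≤ B * (NS c d m + 1)^(d+2) := by
    have h1 : NS c d m + 1 ≤ (NS c d m + 1)^(d+2) := Nat.le_self_pow (by omega) _
    have h2 : (NS c d m + 1)^(d+2) ≤ B * (NS c d m + 1)^(d+2) :=
      Nat.le_mul_of_pos_left _ (by omega)
    omega
  exact le_trans hfin hId

/-- Erdős–Rado upper bounds for the adjacent Ramsey function with constant parameter: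
`AR_k^{d+1}(r) ≤ 2_d(k^{r+1})` for all sufficiently large `k`. -/
theorem AR_constant_upper_bound (d r : ℕ) (hd : 1 ≤ d) (hr : 1 ≤ r) :
    ∃ K, ∀ k, K ≤ k → ARnum (fun _ => k) (d+1) r ≤ tower d (k^(r+1)) := by
  classical
  obtain ⟨K, hK⟩ := arith d r hd hr
  refine ⟨K, fun k hk => ?_⟩
  apply Nat.sInf_le
  show ARProp (fun _ => k) (d+1) r (tower d (k^(r+1)))
  intro C hC
  set R := tower d (k^(r+1)) with hR
  have hCb : ∀ x : Fin (d+1) → ℕ, (∀ i, x i ≤ R) → ∀ j, C x j ≤ k + 1 := by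
    intro x hx j
    exact hC x hx j
  set C₀ : (Fin (d+1) → ℕ) → (Fin r → Fin (k+2)) := fun x j =>
    ⟨min (C x j) (k+1), by omega⟩ with hC₀
  set P : ℕ := (k+2)^r with hP
  set m : ℕ := P + 1 + d with hm
  set L : Finset ℕ := Finset.range (R+1) with hL
  have hcard : Fintype.card (Fin r → Fin (k+2)) = P := by
    rw [Fintype.card_fun, Fintype.card_fin, Fintype.card_fin]
  have hsize : NS (Fintype.card (Fin r → Fin (k+2))) d m ≤ L.card := by
    rw [hcard, hL, Finset.card_range]
    exact le_trans (hK k hk) (by omega)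
  obtain ⟨z, hz1, hz2, Dc, hDc⟩ := reduce (Fin r → Fin (k+2)) d C₀ m L hsize
  have hzR : ∀ n < m, z n ≤ R := by
    intro n hn
    have := hz2 n hn
    rw [hL, Finset.mem_range] at this
    omega
  -- the main construction, given an increasing pair for Dc
  suffices hmain : ∀ i j : ℕ, i < j → j ≤ P → Dc i = Dc j →
      ∃ x : Fin (d+1+1) → ℕ, StrictMono x ∧ x (Fin.last (d+1)) ≤ R ∧
        ∀ jc, C (fun i => x i.castSucc) jc ≤ C (fun i => x i.succ) jc by
    have hlt : Fintype.card (Fin r → Fin (k+2)) < Fintype.card (Fin (P+1)) := by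
      rw [hcard, Fintype.card_fin]; omega
    obtain ⟨a, b, hab, heq⟩ :=
      Fintype.exists_ne_map_eq_of_card_lt (fun n : Fin (P+1) => Dc (n:ℕ)) hlt
    have hvne : (a:ℕ) ≠ (b:ℕ) := fun h => hab (Fin.ext h)
    rcases Nat.lt_or_ge (a:ℕ) (b:ℕ) with h | h
    · exact hmain a b h (by omega) heq
    · exact hmain b a (by omega) (by omega) heq.symm
  intro i j hij hjP heq
  set J : ℕ → ℕ := fun n => if n = 0 then i else if n = 1 then j else P + n - 1 with hJ
  have hJmono : ∀ n n', n < n' → n' ≤ d + 1 → J n < J n' := by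
    intro n n' h1 h2
    simp only [hJ]
    split_ifs <;> omega
  have hJlt : ∀ n, n ≤ d + 1 → J n < m := by
    intro n hn
    simp only [hJ]
    split_ifs <;> omega
  have hxmono : StrictMono (fun a : Fin (d+1+1) => z (J (a:ℕ))) := by
    intro a b hab
    exact hz1 _ _ (hJmono _ _ hab (by omega)) (hJlt _ (by omega))
  have hw1 : C₀ (fun i : Fin (d+1) => z (J (i:ℕ))) = Dc i := by
    have h1 : ∀ n < d, J n < J (n+1) := fun n hn => hJmono n (n+1) (by omega) (by omega)
    have h2 := hDc J h1 (hJlt d (by omega))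
    have h3 : J 0 = i := by simp [hJ]
    rw [h2, h3]
  have hw2 : C₀ (fun i : Fin (d+1) => z (J ((i:ℕ)+1))) = Dc i := by
    have h1 : ∀ n < d, J (n+1) < J (n+2) := fun n hn => hJmono (n+1) (n+2) (by omega) (by omega)
    have h2 := hDc (fun n => J (n+1)) h1 (hJlt (d+1) le_rfl)
    have h3 : J 1 = j := by simp [hJ]
    rw [h2]
    show Dc (J 1) = Dc i
    rw [h3, heq]
  refine ⟨fun a : Fin (d+1+1) => z (J (a:ℕ)), hxmono, hzR _ (hJlt _ (by simp [Fin.last])), ?_⟩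
  intro jc
  have hcast : (fun i : Fin (d+1) => z (J ((i.castSucc : Fin (d+2)) : ℕ)))
      = fun i : Fin (d+1) => z (J (i:ℕ)) := by
    funext i; rw [Fin.coe_castSucc]
  have hsucc : (fun i : Fin (d+1) => z (J ((i.succ : Fin (d+2)) : ℕ)))
      = fun i : Fin (d+1) => z (J ((i:ℕ)+1)) := by
    funext i; rw [Fin.val_succ]
  rw [hcast, hsucc]
  -- coordinates are ≤ R
  have hb1 : ∀ i' : Fin (d+1), z (J (i':ℕ)) ≤ R := fun i' => hzR _ (hJlt _ (by omega))
  have hb2 : ∀ i' : Fin (d+1), z (J ((i':ℕ)+1)) ≤ R := fun i' => hzR _ (hJlt _ (by omega))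
  have h':= congrFun (hw1.trans hw2.symm) jc
  have h1 : min (C (fun i : Fin (d+1) => z (J (i:ℕ))) jc) (k+1)
      = min (C (fun i : Fin (d+1) => z (J ((i:ℕ)+1))) jc) (k+1) := by
    have := congrArg Fin.val h'
    simpa [hC₀] using this
  have h2 := hCb (fun i : Fin (d+1) => z (J (i:ℕ))) hb1 jc
  have h3 := hCb (fun i : Fin (d+1) => z (J ((i:ℕ)+1))) hb2 jc
  omega
end

section
/- For all d ≥ 1, m ≥ 0, r ≥ 2 and all k ≥ r + m: PH^d_k(m,r) ≤ 2_{d-1}(r^{d^2}·k) + m, and hence PH^d_k(m,r) ≤ 2_{d-1}((r^{d^2}+1)·k). -/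
/-- `PHProp f d m r R` : every colouring of the `d`-element subsets of `{m,…,R}` with
`r` colours admits a homogeneous `H ⊆ {m,…,R}` with `|H| ≥ f(min H)`. -/
def PHProp (f : ℕ → ℕ) (d m r R : ℕ) : Prop :=
  ∀ C : Finset ℕ → ℕ,
    (∀ s ⊆ Finset.Icc m R, s.card = d → C s < r) →
    ∃ H : Finset ℕ, H ⊆ Finset.Icc m R ∧ H.Nonempty ∧ f (sInf (H : Set ℕ)) ≤ H.card ∧
      ∀ s ⊆ H, ∀ t ⊆ H, s.card = d → t.card = d → C s = C t

/-- `PHnum f d m r` : the least `R` witnessing the Paris–Harrington theorem `PH_f^d(m,r)`. -/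
noncomputable def PHnum (f : ℕ → ℕ) (d m r : ℕ) : ℕ := sInf {R | PHProp f d m r R}



lemma tower_succ (n i : ℕ) : tower (n+1) i = 2 ^ tower n i := rfl

lemma le_tower (j x : ℕ) : x ≤ tower j x := by
  induction j with
  | zero => simp [tower]
  | succ j ih => calc x ≤ tower j x := ih
                   _ ≤ 2 ^ tower j x := Nat.le_of_lt (Nat.lt_two_pow_self)
                   _ = tower (j+1) x := rfl

lemma tower_mono_s15 (j : ℕ) : Monotone (tower j) := by
  induction j with
  | zero => exact fun a b h => h
  | succ j ih => exact fun a b h => Nat.pow_le_pow_right (by norm_num) (ih h)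

lemma tower_pos (j x : ℕ) (hx : 1 ≤ x) : 1 ≤ tower j x := le_trans hx (le_tower j x)

lemma tower_add_le (j x y : ℕ) : tower j x + y ≤ tower j (x + y) := by
  induction j with
  | zero => simp [tower]
  | succ j ih =>
      show 2 ^ tower j x + y ≤ 2 ^ tower j (x+y)
      calc 2 ^ tower j x + y ≤ 2 ^ tower j x * 2 ^ y := by
              have h1 : 1 ≤ 2 ^ tower j x := Nat.one_le_two_pow
              have h2 : y + 1 ≤ 2 ^ y := Nat.lt_two_pow_self (n := y)
              nlinarith
        _ = 2 ^ (tower j x + y) := (pow_add 2 _ _).symm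
        _ ≤ 2 ^ tower j (x+y) := Nat.pow_le_pow_right (by norm_num) ih

/-- multiplicative growth of tower for j ≥ 1 -/
lemma two_pow_mul_tower (j x y : ℕ) (hj : 1 ≤ j) : 2 ^ y * tower j x ≤ tower j (x + y) := by
  induction j with
  | zero => omega
  | succ j ih =>
      rcases Nat.eq_or_lt_of_le hj with h1 | h1
      · -- j + 1 = 1, j = 0
        have : j = 0 := by omega
        subst this
        show 2 ^ y * 2 ^ x ≤ 2 ^ (x + y)
        rw [pow_add]; ring_nf; exact le_refl _
      · have hj' : 1 ≤ j := by omega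
        have h := ih hj'
        show 2 ^ y * 2 ^ tower j x ≤ 2 ^ tower j (x + y)
        calc 2 ^ y * 2 ^ tower j x = 2 ^ (tower j x + y) := by rw [pow_add]; ring
          _ ≤ 2 ^ (2 ^ y * tower j x) := by
              apply Nat.pow_le_pow_right (by norm_num)
              have h1 : 1 ≤ tower j x := by
                induction j with
                | zero => omega
                | succ j _ => exact Nat.one_le_two_pow
              have h2 : y + 1 ≤ 2 ^ y := Nat.lt_two_pow_self (n := y)
              nlinarith
          _ ≤ 2 ^ tower j (x + y) := Nat.pow_le_pow_right (by norm_num) h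



lemma key2 (j r k : ℕ) (hr : 2 ≤ r) (hk : 1 ≤ k) :
    r + j + 3 + (j+2) * tower j (r^((j+2)^2)*k) ≤ tower j (r^((j+3)^2)*k) := by
  induction j with
  | zero =>
    simp only [tower]
    have e1 : r^(((0:ℕ)+2)^2) = r^4 := by norm_num
    have e2 : r^(((0:ℕ)+3)^2) = r^9 := by norm_num
    rw [e1, e2]
    have h4 : (16:ℕ) ≤ r^4 := by calc (16:ℕ) = 2^4 := by norm_num
                                    _ ≤ r^4 := Nat.pow_le_pow_left hr 4
    have h5 : (32:ℕ) ≤ r^5 := by calc (32:ℕ) = 2^5 := by norm_num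
                                    _ ≤ r^5 := Nat.pow_le_pow_left hr 5
    have ha : r ≤ r^4*k := by
      calc r = r^1*1 := by ring
        _ ≤ r^4*k := Nat.mul_le_mul (Nat.pow_le_pow_right (by omega) (by omega)) hk
    have hb : 3 ≤ r^4*k := by
      calc (3:ℕ) ≤ 16*1 := by norm_num
        _ ≤ r^4*k := Nat.mul_le_mul h4 hk
    have hc : 32*(r^4*k) ≤ r^5*(r^4*k) := Nat.mul_le_mul_right _ h5
    have h9 : r^9*k = r^5*(r^4*k) := by ring
    rw [show r^(9:ℕ) * k = r^5*(r^4*k) from by ring] at *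
    omega
  | succ j _ =>
    set e := j + 1 with hej
    set A := r^((e+2)^2)*k with hA
    set B := r^((e+3)^2)*k with hB
    have hq1 : 1 ≤ r^(2*e+5) := Nat.one_le_pow _ _ (by omega)
    have hApos : 1 ≤ A := by
      have h0 : 1 ≤ r^((e+2)^2) := Nat.one_le_pow _ _ (by omega)
      calc 1 = 1*1 := by ring
        _ ≤ r^((e+2)^2)*k := Nat.mul_le_mul h0 hk
    have hpow : r^((e+3)^2) = r^((e+2)^2) * r^(2*e+5) := by
      rw [← pow_add]; ring_nf
    have hBq : B = A * r^(2*e+5) := by rw [hB, hpow, hA]; ring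
    set D := A * (r^(2*e+5) - 1) with hD
    have hBA : B = A + D := by
      rw [hBq, hD]
      calc A * r^(2*e+5) = A * ((r^(2*e+5) - 1) + 1) := by rw [Nat.sub_add_cancel hq1]
        _ = A + A * (r^(2*e+5) - 1) := by ring
    have hDbig : r + 2*e + 5 ≤ 2^D := by
      have h1' : r^(2*e+5) - 1 ≤ D := by
        have := Nat.mul_le_mul_right (r^(2*e+5) - 1) hApos
        omega
      have h2' : D + 1 ≤ 2^D := Nat.lt_two_pow_self (n := D)
      have h3' : r * 2^(2*e+4) ≤ r^(2*e+5) := by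
        calc r * 2^(2*e+4) ≤ r * r^(2*e+4) :=
              Nat.mul_le_mul_left _ (Nat.pow_le_pow_left hr _)
          _ = r^(2*e+5) := (pow_succ' r (2*e+4)).symm
      have h4' : 2*e + 5 ≤ 2^(2*e+4) := by
        have := Nat.lt_two_pow_self (n := 2*e+4); omega
      have h5' : r * (2*e+5) ≤ r * 2^(2*e+4) := Nat.mul_le_mul_left _ h4'
      nlinarith [h1', h2', h3', h5', hr]
    have hu : 1 ≤ tower e A := tower_pos _ _ hApos
    calc r + e + 3 + (e+2) * tower e A
        ≤ (r + 2*e + 5) * tower e A := by nlinarith [hu]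
      _ ≤ 2^D * tower e A := Nat.mul_le_mul_right _ hDbig
      _ ≤ tower e (A + D) := two_pow_mul_tower e A D (by omega)
      _ = tower e B := by rw [hBA]

lemma key (d r k : ℕ) (hd : 1 ≤ d) (hr : 2 ≤ r) (hk : 1 ≤ k) :
    1 + r * 2^d * (tower (d-1) (r^(d^2)*k))^d ≤ tower (d-1) (r^((d+1)^2)*k) := by
  rcases Nat.eq_or_lt_of_le hd with h1 | h1
  · subst_vars
    simp only [Nat.sub_self, tower]
    have e1 : r^((1:ℕ)^2) = r := by norm_num
    have e2 : r^(((1:ℕ)+1)^2) = r^4 := by norm_num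
    rw [e1, e2]
    have h4 : 4 ≤ r^2 := by calc (4:ℕ) = 2^2 := by norm_num
                              _ ≤ r^2 := Nat.pow_le_pow_left hr 2
    have h4k : 4*(r^2*k) ≤ r^4*k := by
      calc 4*(r^2*k) = (4*r^2)*k := by ring
        _ ≤ (r^2*r^2)*k := Nat.mul_le_mul_right _ (Nat.mul_le_mul_right _ h4)
        _ = r^4*k := by ring
    have h1k : 1 ≤ r^2*k := by
      calc 1 = 1*1 := by ring
        _ ≤ r^2*k := Nat.mul_le_mul (Nat.one_le_pow _ _ (by omega)) hk
    have hgoal : 1 + r * 2^1 * (r*k)^1 = 1 + 2*(r^2*k) := by ring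
    rw [hgoal]
    omega
  · obtain ⟨j, rfl⟩ : ∃ j, d = j + 2 := ⟨d-2, by omega⟩
    have hk2 := key2 j r k hr hk
    rw [show (j+2) - 1 = j + 1 from by omega, show (j+2+1) = j+3 from by omega]
    set u := tower j (r^((j+2)^2)*k) with hu
    set w := tower j (r^((j+3)^2)*k) with hw
    show 1 + r * 2^(j+2) * (2^u)^(j+2) ≤ 2^w
    have key2' : r + j + 3 + (j+2)*u ≤ w := hk2
    have hprod : 2 * (2^r * 2^(j+2) * (2^u)^(j+2)) = 2^(1 + r + (j+2) + u*(j+2)) := by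
      rw [← pow_mul, pow_add, pow_add, pow_add]
      ring
    calc 1 + r * 2^(j+2) * (2^u)^(j+2)
        ≤ 2 * (r * 2^(j+2) * (2^u)^(j+2)) := by
          have hpos : 1 ≤ r * 2^(j+2) * (2^u)^(j+2) :=
            Nat.one_le_iff_ne_zero.mpr (by positivity)
          omega
      _ ≤ 2 * (2^r * 2^(j+2) * (2^u)^(j+2)) := by
          have : r ≤ 2^r := Nat.le_of_lt (Nat.lt_two_pow_self (n := r))
          gcongr
      _ = 2^(1 + r + (j+2) + u*(j+2)) := hprod
      _ ≤ 2^w := by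
          apply Nat.pow_le_pow_right (by norm_num)
          nlinarith [key2']


def Req (q : ℕ) : ℕ → ℕ
  | 0 => 0
  | j+1 => q * Req q j + 1

lemma req_le (q : ℕ) (hq : 2 ≤ q) : ∀ j, Req q j + 1 ≤ 2 * q ^ j := by
  intro j
  induction j with
  | zero => simp [Req]
  | succ j ih =>
    show q * Req q j + 1 + 1 ≤ 2 * q ^ (j+1)
    calc q * Req q j + 1 + 1 ≤ q * Req q j + q := by omega
      _ = q * (Req q j + 1) := by ring
      _ ≤ q * (2 * q ^ j) := Nat.mul_le_mul_left _ ih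
      _ = 2 * q ^ (j+1) := by ring
/-- End-homogeneity invariant: the colour of `insert a s` for `s ⊆ X` of size `e`
and `a` above `s` (in `X ∪ S`) does not depend on `a`. -/
def EInv (C : Finset ℕ → ℕ) (e : ℕ) (X S : Finset ℕ) : Prop :=
  ∀ s ⊆ X, s.card = e → ∀ a ∈ X ∪ S, ∀ b ∈ X ∪ S,
    (∀ z ∈ s, z < a) → (∀ z ∈ s, z < b) → C (insert a s) = C (insert b s)

lemma grow (A : Finset ℕ) (C : Finset ℕ → ℕ) (r e nmax : ℕ) (hr : 2 ≤ r)
    (hC : ∀ s ⊆ A, s.card = e + 1 → C s < r) :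
    ∀ (j : ℕ) (X S : Finset ℕ), X ⊆ A → S ⊆ A → (∀ x ∈ X, ∀ y ∈ S, x < y) →
      EInv C e X S → X.card + j ≤ nmax →
      Req (r ^ nmax ^ (e-1)) j ≤ S.card →
      ∃ X', X ⊆ X' ∧ X' ⊆ A ∧ X'.card = X.card + j ∧ EInv C e X' ∅ := by
  intro j
  induction j with
  | zero =>
    intro X S hXA _ _ hInv _ _
    refine ⟨X, subset_rfl, hXA, rfl, fun s hs hcard a ha b hb hsa hsb => ?_⟩
    rw [Finset.union_empty] at ha hb
    exact hInv s hs hcard a (Finset.mem_union_left _ ha) b (Finset.mem_union_left _ hb) hsa hsb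
  | succ j ih =>
    intro X S hXA hSA hXS hInv hcard hreq
    have hrpos : 0 < r := by omega
    set q := r ^ nmax ^ (e-1) with hq
    have hreq1 : q * Req q j + 1 ≤ S.card := hreq
    have hS : S.Nonempty := Finset.card_pos.1 (by omega)
    set x := S.min' hS with hx
    have hxS : x ∈ S := S.min'_mem hS
    have hxA : x ∈ A := hSA hxS
    have hxX : x ∉ X := fun h => lt_irrefl x (hXS x h x hxS)
    -- classify candidates y by the colours C (insert y (insert x t)) for (e-1)-subsets t of X
    have hfin : Fintype {t : Finset ℕ // t ∈ X.powersetCard (e-1)} := FinsetCoe.fintype _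
    set I := {t : Finset ℕ // t ∈ X.powersetCard (e-1)} with hI
    have hne : Nonempty (Fin r) := ⟨⟨0, hrpos⟩⟩
    set g : ℕ → (I → Fin r) :=
      fun y t => if h : C (insert y (insert x t.1)) < r then ⟨_, h⟩ else ⟨0, hrpos⟩ with hg
    have hcardI : Fintype.card I ≤ nmax ^ (e-1) := by
      have h1 : Fintype.card I = (X.powersetCard (e-1)).card := Fintype.card_coe _
      rw [h1, Finset.card_powersetCard]
      calc X.card.choose (e-1) ≤ X.card ^ (e-1) := Nat.choose_le_pow _ _
        _ ≤ nmax ^ (e-1) := Nat.pow_le_pow_left (by omega) _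
    have hcardT : (Finset.univ : Finset (I → Fin r)).card ≤ q := by
      rw [Finset.card_univ, Fintype.card_fun, Fintype.card_fin]
      exact Nat.pow_le_pow_right hrpos hcardI
    have hpig : (Finset.univ : Finset (I → Fin r)).card * Req q j ≤ (S.erase x).card := by
      rw [Finset.card_erase_of_mem hxS]
      calc (Finset.univ : Finset (I → Fin r)).card * Req q j ≤ q * Req q j :=
            Nat.mul_le_mul_right _ hcardT
        _ ≤ S.card - 1 := by omega
    obtain ⟨c, _, hfib⟩ := Finset.exists_le_card_fiber_of_mul_le_card_of_maps_to
      (fun a _ => Finset.mem_univ (g a)) Finset.univ_nonempty hpig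
    set S₂ := {y ∈ S.erase x | g y = c} with hS₂
    have hS₂S : S₂ ⊆ S := (Finset.filter_subset _ _).trans (Finset.erase_subset _ _)
    have hX₁A : insert x X ⊆ A := Finset.insert_subset hxA hXA
    have horder : ∀ u ∈ insert x X, ∀ y ∈ S₂, u < y := by
      intro u hu y hy
      have hy' : y ∈ S.erase x := Finset.mem_of_mem_filter _ hy
      have hyx : y ≠ x := Finset.ne_of_mem_erase hy'
      have hyS : y ∈ S := Finset.mem_of_mem_erase hy'
      have hxy : x < y := lt_of_le_of_ne (S.min'_le y hyS) (Ne.symm hyx)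
      rcases Finset.mem_insert.1 hu with rfl | hu'
      · exact hxy
      · exact hXS u hu' y hyS
    have hsub : insert x X ∪ S₂ ⊆ X ∪ S := by
      intro z hz
      rcases Finset.mem_union.1 hz with hz | hz
      · rcases Finset.mem_insert.1 hz with rfl | hz'
        · exact Finset.mem_union_right _ hxS
        · exact Finset.mem_union_left _ hz'
      · exact Finset.mem_union_right _ (hS₂S hz)
    have hInv₂ : EInv C e (insert x X) S₂ := by
      intro s hs hcards a ha b hb hsa hsb
      by_cases hxs : x ∈ s
      · -- a, b must be in S₂, use the fibre equality
        have hmem : ∀ a', a' ∈ insert x X ∪ S₂ → (∀ z ∈ s, z < a') → a' ∈ S₂ := by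
          intro a' ha' hlt
          have hxa : x < a' := hlt x hxs
          rcases Finset.mem_union.1 ha' with h | h
          · rcases Finset.mem_insert.1 h with rfl | h2
            · omega
            · exact absurd (hXS a' h2 x hxS) (by omega)
          · exact h
        have haS := hmem a ha hsa
        have hbS := hmem b hb hsb
        have hts : s.erase x ∈ X.powersetCard (e-1) := by
          rw [Finset.mem_powersetCard]
          refine ⟨fun z hz => ?_, ?_⟩
          · have hz1 : z ∈ s := Finset.mem_of_mem_erase hz
            have hz2 : z ≠ x := Finset.ne_of_mem_erase hz
            rcases Finset.mem_insert.1 (hs hz1) with h | h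
            · exact absurd h hz2
            · exact h
          · rw [Finset.card_erase_of_mem hxs, hcards]
        set t0 : I := ⟨s.erase x, hts⟩ with ht0
        have hins : insert x (s.erase x) = s := Finset.insert_erase hxs
        have hCbound : ∀ a', a' ∈ S₂ → (∀ z ∈ s, z < a') → C (insert a' s) < r := by
          intro a' ha' hlt
          apply hC
          · exact Finset.insert_subset (hSA (hS₂S ha')) (hs.trans hX₁A)
          · rw [Finset.card_insert_of_notMem (fun h => lt_irrefl a' (hlt a' h)), hcards]
        have hCa : C (insert a s) < r := hCbound a haS hsa
        have hCb : C (insert b s) < r := hCbound b hbS hsb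
        have hgab : g a t0 = g b t0 := by
          have h1 : g a = c := (Finset.mem_filter.1 haS).2
          have h2 : g b = c := (Finset.mem_filter.1 hbS).2
          rw [h1, h2]
        have hval : ∀ a', (h' : C (insert a' s) < r) → g a' t0 = ⟨C (insert a' s), h'⟩ := by
          intro a' h'
          show (if h : C (insert a' (insert x (s.erase x))) < r
            then (⟨C (insert a' (insert x (s.erase x))), h⟩ : Fin r) else ⟨0, hrpos⟩) = _
          rw [hins]
          exact dif_pos h'
        rw [hval a hCa, hval b hCb] at hgab
        exact congrArg Fin.val hgab
      · -- s ⊆ X : use the old invariant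
        have hsX : s ⊆ X := by
          intro z hz
          rcases Finset.mem_insert.1 (hs hz) with h | h
          · exact absurd (h ▸ hz) hxs
          · exact h
        exact hInv s hsX hcards a (hsub ha) b (hsub hb) hsa hsb
    have hcard₁ : (insert x X).card = X.card + 1 := Finset.card_insert_of_notMem hxX
    obtain ⟨X', hXX', hX'A, hX'card, hX'inv⟩ :=
      ih (insert x X) S₂ hX₁A (hS₂S.trans hSA) horder hInv₂ (by omega) hfib
    exact ⟨X', (Finset.subset_insert x X).trans hXX', hX'A, by omega, hX'inv⟩

lemma step (d m r k R' R : ℕ) (hd : 1 ≤ d) (hr : 2 ≤ r) (hk : 2 ≤ k)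
    (ih : PHProp (fun _ => k) d m r R') (hmR' : m ≤ R') (hRR' : R' ≤ R)
    (hsize : Req (r ^ (R'-m+2) ^ (d-1)) (R'-m+2) ≤ R + 1 - m) :
    PHProp (fun _ => k) (d+1) m r R := by
  intro C hC
  have hmR : m ≤ R := le_trans hmR' hRR'
  set n := R' - m + 2 with hn
  -- grow an end-homogeneous set X of size n
  have hEInv0 : EInv C d ∅ (Finset.Icc m R) := by
    intro s hs hcard
    rw [Finset.subset_empty] at hs
    subst hs
    simp at hcard
    omega
  have hScard : (Finset.Icc m R).card = R + 1 - m := by rw [Nat.card_Icc]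
  obtain ⟨X, -, hXA, hXcard, hXinv⟩ :=
    grow (Finset.Icc m R) C r d n hr (fun s hs hc => hC s hs hc) n ∅ (Finset.Icc m R)
      (Finset.empty_subset _) subset_rfl (by simp) hEInv0 (by simp)
      (by rw [hScard]; exact hsize)
  rw [Finset.card_empty, Nat.zero_add] at hXcard
  have hXne : X.Nonempty := Finset.card_pos.1 (by omega)
  set M := X.max' hXne with hM
  have hMX : M ∈ X := X.max'_mem hXne
  set X' := X.erase M with hX'
  have hX'X : X' ⊆ X := Finset.erase_subset _ _
  have hX'card : X'.card = R' - m + 1 := by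
    rw [hX', Finset.card_erase_of_mem hMX, hXcard]
    omega
  have hIcard : (Finset.Icc m R').card = R' - m + 1 := by rw [Nat.card_Icc]; omega
  -- order bijection from Icc m R' to X'
  set e₁ := (Finset.Icc m R').orderIsoOfFin hIcard with he₁
  set e₂ := X'.orderIsoOfFin hX'card with he₂
  set g : ℕ → ℕ := fun z => if h : z ∈ Finset.Icc m R' then (e₂ (e₁.symm ⟨z, h⟩) : ℕ) else 0
    with hg
  have hgmem : ∀ z ∈ Finset.Icc m R', g z ∈ X' := by
    intro z hz
    rw [hg]
    simp only [dif_pos hz]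
    exact (e₂ (e₁.symm ⟨z, hz⟩)).2
  have hginj : Set.InjOn g (Finset.Icc m R' : Set ℕ) := by
    intro z₁ h₁ z₂ h₂ heq
    rw [Finset.mem_coe] at h₁ h₂
    rw [hg] at heq
    simp only [dif_pos h₁, dif_pos h₂] at heq
    have h3 := e₁.symm.injective (e₂.injective (Subtype.coe_injective heq))
    exact congrArg Subtype.val h3
  -- the induced d-colouring on Icc m R'
  set C' : Finset ℕ → ℕ := fun s => C (insert M (s.image g)) with hC'def
  have himg : ∀ s ⊆ Finset.Icc m R', (s.image g) ⊆ X' := by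
    intro s hs y hy
    obtain ⟨z, hz, rfl⟩ := Finset.mem_image.1 hy
    exact hgmem z (hs hz)
  have himgcard : ∀ s ⊆ Finset.Icc m R', (s.image g).card = s.card := by
    intro s hs
    exact Finset.card_image_of_injOn (hginj.mono (by exact_mod_cast hs))
  have hXIcc : X ⊆ Finset.Icc m R := hXA
  have hMnot : ∀ s ⊆ Finset.Icc m R', M ∉ s.image g := by
    intro s hs h
    exact Finset.notMem_erase M X (himg s hs h)
  have hltM : ∀ y ∈ X', y < M := by
    intro y hy
    have h1 : y ≠ M := Finset.ne_of_mem_erase hy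
    have h2 : y ≤ M := X.le_max' y (hX'X hy)
    omega
  have hC'bound : ∀ s ⊆ Finset.Icc m R', s.card = d → C' s < r := by
    intro s hs hcard
    apply hC
    · apply Finset.insert_subset (hXIcc hMX)
      exact fun y hy => hXIcc (hX'X (himg s hs hy))
    · rw [Finset.card_insert_of_notMem (hMnot s hs), himgcard s hs, hcard]
  obtain ⟨H', hH'sub, hH'ne, hH'card, hH'hom⟩ := ih C' hC'bound
  refine ⟨H'.image g, ?_, hH'ne.image g, ?_, ?_⟩
  · exact fun y hy => hXIcc (hX'X (himg H' hH'sub hy))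
  · rw [himgcard H' hH'sub]
    exact le_trans hH'card (le_refl _)
  · -- homogeneity at level d+1
    have hkey : ∀ u ⊆ H'.image g, u.card = d + 1 →
        ∃ w ⊆ H', w.card = d ∧ C u = C' w := by
      intro u hu hucard
      have hune : u.Nonempty := Finset.card_pos.1 (by omega)
      set a := u.max' hune with ha
      have hau : a ∈ u := u.max'_mem hune
      set u₀ := u.erase a with hu₀
      have hu₀u : u₀ ⊆ u := Finset.erase_subset _ _
      have huX' : u ⊆ X' := fun y hy => himg H' hH'sub (hu hy)
      have hu₀X : u₀ ⊆ X := fun y hy => hX'X (huX' (hu₀u hy))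
      have hu₀card : u₀.card = d := by
        rw [hu₀, Finset.card_erase_of_mem hau, hucard]
        omega
      have hlta : ∀ z ∈ u₀, z < a := by
        intro z hz
        have h1 : z ≠ a := Finset.ne_of_mem_erase hz
        have h2 : z ≤ a := u.le_max' z (hu₀u hz)
        omega
      have hltM' : ∀ z ∈ u₀, z < M := fun z hz => hltM z (huX' (hu₀u hz))
      have haX : a ∈ X := hX'X (huX' hau)
      have hend : C (insert a u₀) = C (insert M u₀) :=
        hXinv u₀ hu₀X hu₀card a (Finset.mem_union_left _ haX) M
          (Finset.mem_union_left _ hMX) hlta hltM'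
      have hins : insert a u₀ = u := Finset.insert_erase hau
      obtain ⟨w, hwH', hwimg⟩ := Finset.subset_image_iff.1 (hu₀u.trans hu)
      have hwcard : w.card = d := by
        have := himgcard w (hwH'.trans hH'sub)
        rw [hwimg] at this
        omega
      refine ⟨w, hwH', hwcard, ?_⟩
      rw [hC'def]
      show C u = C (insert M (w.image g))
      rw [hwimg, ← hins, hend]
    intro u hu v hv hucard hvcard
    obtain ⟨wu, hwu, hwucard, hCu⟩ := hkey u hu hucard
    obtain ⟨wv, hwv, hwvcard, hCv⟩ := hkey v hv hvcard
    rw [hCu, hCv]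
    exact hH'hom wu hwu wv hwv hwucard hwvcard


lemma base_case (m r k : ℕ) (hr : 2 ≤ r) (hk : r + m ≤ k) :
    PHProp (fun _ => k) 1 m r (r * k + m) := by
  intro C hC
  have hrpos : 0 < r := by omega
  set A := Finset.Icc m (r*k+m) with hA
  have hcardA : A.card = r*k+1 := by rw [hA, Nat.card_Icc]; omega
  set g : ℕ → Fin r := fun y => if h : C {y} < r then ⟨_, h⟩ else ⟨0, hrpos⟩ with hg
  have hne : Nonempty (Fin r) := ⟨⟨0, hrpos⟩⟩
  have hpig : (Finset.univ : Finset (Fin r)).card * k ≤ A.card := by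
    rw [Finset.card_univ, Fintype.card_fin, hcardA]
    exact Nat.le_succ _
  obtain ⟨c, -, hfib⟩ := Finset.exists_le_card_fiber_of_mul_le_card_of_maps_to
    (fun a _ => Finset.mem_univ (g a)) Finset.univ_nonempty hpig
  set H := {y ∈ A | g y = c} with hH
  have hval : ∀ a, a ∈ H → (g a).val = C {a} := by
    intro a haH
    have haA : a ∈ A := Finset.mem_of_mem_filter _ haH
    have hCa : C {a} < r := hC {a} (Finset.singleton_subset_iff.2 haA) (Finset.card_singleton a)
    rw [hg]
    simp only [dif_pos hCa]
  refine ⟨H, Finset.filter_subset _ _, ?_, hfib, ?_⟩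
  · exact Finset.card_pos.1 (by omega)
  · intro s hs t ht hscard htcard
    obtain ⟨a, rfl⟩ := Finset.card_eq_one.1 hscard
    obtain ⟨b, rfl⟩ := Finset.card_eq_one.1 htcard
    have haH : a ∈ H := hs (Finset.mem_singleton_self a)
    have hbH : b ∈ H := ht (Finset.mem_singleton_self b)
    have hga : g a = c := (Finset.mem_filter.1 haH).2
    have hgb : g b = c := (Finset.mem_filter.1 hbH).2
    calc C {a} = (g a).val := (hval a haH).symm
      _ = (g b).val := by rw [hga, hgb]
      _ = C {b} := hval b hbH

lemma main_lemma (d : ℕ) (hd : 1 ≤ d) : ∀ m r k, 2 ≤ r → r + m ≤ k →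
    PHProp (fun _ => k) d m r (tower (d-1) (r^(d^2)*k) + m) := by
  induction d, hd using Nat.le_induction with
  | base =>
    intro m r k hr hk
    have h1 : tower (1-1) (r^((1:ℕ)^2)*k) = r*k := by norm_num [tower]
    rw [h1]
    exact base_case m r k hr hk
  | succ d hd ih =>
    intro m r k hr hk
    have hk2 : 2 ≤ k := by omega
    have hk1 : 1 ≤ k := by omega
    set t := tower (d-1) (r^(d^2)*k) with ht
    set R' := t + m with hR'
    have hd1 : d + 1 - 1 = d := by omega
    rw [hd1]
    set B := r^((d+1)^2)*k with hB
    set n := R' - m + 2 with hn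
    have hnt : n = t + 2 := by omega
    have hrd2 : 2 ≤ r^(d^2) := by
      calc (2:ℕ) = 2^1 := by norm_num
        _ ≤ r^(d^2) := by
            apply le_trans (Nat.pow_le_pow_left hr 1)
            exact Nat.pow_le_pow_right (by omega) (by nlinarith [hd])
    have ht4 : 4 ≤ t := by
      calc (4:ℕ) = 2*2 := by norm_num
        _ ≤ r^(d^2)*k := Nat.mul_le_mul hrd2 hk2
        _ ≤ t := le_tower _ _
    set q := r ^ n ^ (d-1) with hq
    have hexp1 : 1 ≤ n ^ (d-1) := Nat.one_le_pow _ _ (by omega)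
    have hq2 : 2 ≤ q := by
      calc (2:ℕ) ≤ r := hr
        _ = r^1 := (pow_one r).symm
        _ ≤ q := Nat.pow_le_pow_right (by omega) hexp1
    have hreq : Req q n + 1 ≤ 2 * q ^ n := req_le q hq2 n
    have hd' : d - 1 + 1 = d := by omega
    have hqn : q ^ n = r ^ (n^d) := by
      rw [hq, ← pow_mul, ← pow_succ, hd']
    have h3 : r ^ (n^d) ≤ 2 ^ (r * n^d) := by
      calc r^(n^d) ≤ (2^r)^(n^d) :=
            Nat.pow_le_pow_left (Nat.le_of_lt (Nat.lt_two_pow_self (n := r))) _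
        _ = 2^(r*n^d) := by rw [← pow_mul]
    have hkey := key d r k (by omega) hr hk1
    have hnd : n ^ d ≤ 2^d * t^d := by
      calc n^d ≤ (2*t)^d := Nat.pow_le_pow_left (by omega) d
        _ = 2^d * t^d := mul_pow 2 t d
    have hAbound : 1 + r * n^d ≤ tower (d-1) B := by
      calc 1 + r * n^d ≤ 1 + r * (2^d * t^d) := by
            have := Nat.mul_le_mul_left r hnd
            omega
        _ = 1 + r * 2^d * t^d := by ring
        _ ≤ tower (d-1) B := hkey
    have hfinal : Req q n ≤ tower d B + 1 := by
      have hc : 2 * q ^ n ≤ tower d B := by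
        calc 2 * q ^ n = 2 * r^(n^d) := by rw [hqn]
          _ ≤ 2 * 2^(r * n^d) := Nat.mul_le_mul_left _ h3
          _ = 2^(1 + r * n^d) := by rw [pow_add]; ring
          _ ≤ 2^(tower (d-1) B) := Nat.pow_le_pow_right (by norm_num) hAbound
          _ = tower d B := by
              obtain ⟨e, rfl⟩ : ∃ e, d = e + 1 := ⟨d-1, by omega⟩
              rw [show e + 1 - 1 = e from by omega]
              rfl
      omega
    apply step d m r k R' (tower d B + m) hd hr hk2 (ih m r k hr hk) (by omega)
    · -- R' ≤ R
      have h5 : t ≤ tower d B := by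
        calc t ≤ tower (d-1) B := by
              apply tower_mono_s15
              rw [hB]
              apply Nat.mul_le_mul_right
              exact Nat.pow_le_pow_right (by omega) (by nlinarith)
          _ ≤ tower d B := by
              obtain ⟨e, rfl⟩ : ∃ e, d = e + 1 := ⟨d-1, by omega⟩
              rw [show e + 1 - 1 = e from by omega]
              exact Nat.le_of_lt (Nat.lt_two_pow_self)
      omega
    · -- size hypothesis
      have : tower d B + m + 1 - m = tower d B + 1 := by omega
      rw [this]
      exact hfinal

/-- Erdős–Rado upper bounds for the Paris–Harrington function with constant parameter:
`PH^d_k(m,r) ≤ 2_{d-1}(r^{d²}·k) + m ≤ 2_{d-1}((r^{d²}+1)·k)` for `k ≥ r + m`. -/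
theorem PH_constant_upper_bound (d m r k : ℕ) (hd : 1 ≤ d) (hr : 2 ≤ r) (hk : r + m ≤ k) :
    PHnum (fun _ => k) d m r ≤ tower (d-1) (r^(d^2) * k) + m ∧
    PHnum (fun _ => k) d m r ≤ tower (d-1) ((r^(d^2) + 1) * k) := by
  have h1 : PHnum (fun _ => k) d m r ≤ tower (d-1) (r^(d^2) * k) + m :=
    Nat.sInf_le (main_lemma d hd m r k hr hk)
  refine ⟨h1, le_trans h1 ?_⟩
  have h2 : (r^(d^2) + 1) * k = r^(d^2)*k + k := by ring
  rw [h2]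
  calc tower (d-1) (r^(d^2)*k) + m ≤ tower (d-1) (r^(d^2)*k) + k := by omega
    _ ≤ tower (d-1) (r^(d^2)*k + k) := tower_add_le _ _ _
end

section
/- For all d ≥ 2, a ≥ 0, m ≥ 1 and all k ≥ a + d^2·m + 2: KM^d_k(a,m) ≤ 2_{d-2}(k^{d^2·m}) + a ≤ 2_{d-2}(k^{d^2·m+2}). -/
/-- `KMProp f d a m R` : every `f`-regressive colouring of the `d`-element subsets of
`{a,…,R}` admits a min-homogeneous `H ⊆ {a,…,R}` of size `m`. -/
def KMProp (f : ℕ → ℕ) (d a m R : ℕ) : Prop :=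
  ∀ C : Finset ℕ → ℕ,
    (∀ s ⊆ Finset.Icc a R, s.card = d → C s ≤ f (sInf (s : Set ℕ))) →
    ∃ H : Finset ℕ, H ⊆ Finset.Icc a R ∧ H.card = m ∧
      ∀ s ⊆ H, ∀ t ⊆ H, s.card = d → t.card = d →
        sInf (s : Set ℕ) = sInf (t : Set ℕ) → C s = C t

/-- `KMnum f d a m` : the least `R` witnessing the Kanamori–McAloon theorem `KM_f^d(a,m)`. -/
noncomputable def KMnum (f : ℕ → ℕ) (d a m : ℕ) : ℕ := sInf {R | KMProp f d a m R}

def gfun (c e : ℕ) : ℕ → ℕ → ℕ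
  | _, 0 => 0
  | p, n+1 => 1 + (c+1)^(p.choose (e-1)) * gfun c e (p+1) n

def Bnd (c m : ℕ) : ℕ → ℕ
  | 0 => m
  | 1 => m
  | (j+2) => gfun c (j+1) 0 (Bnd c m (j+1) + 1)


/-- Erdős–Rado style greedy extraction of a pre-homogeneous sequence. -/
lemma prehom (c e : ℕ) (he : 1 ≤ e) (C : Finset ℕ → ℕ) (W : Finset ℕ)
    (hC : ∀ s ⊆ W, s.card = e + 1 → C s ≤ c) :
    ∀ n (P A : Finset ℕ), P ⊆ W → A ⊆ W →
    (∀ p ∈ P, ∀ y ∈ A, p < y) →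
    (∀ s ⊆ P, s.card = e → ∀ y ∈ A, ∀ z ∈ A, C (insert y s) = C (insert z s)) →
    gfun c e P.card n ≤ A.card →
    ∃ T ⊆ A, T.card = n ∧
      ∀ s ⊆ P ∪ T, s.card = e → ∀ x ∈ T, ∀ y ∈ T,
        (∀ u ∈ s, u < x) → (∀ u ∈ s, u < y) → C (insert x s) = C (insert y s) := by
  intro n
  induction n with
  | zero =>
    intro P A _ _ _ _ _
    exact ⟨∅, Finset.empty_subset _, Finset.card_empty, fun s _ _ x hx => absurd hx (by simp)⟩
  | succ n ih =>
    intro P A hPW hAW hord hinv hcard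
    have hA0 : A.Nonempty := by
      rw [Finset.nonempty_iff_ne_empty]
      intro h
      simp [h, gfun] at hcard
    set x₀ := A.min' hA0 with hx₀def
    have hx₀A : x₀ ∈ A := A.min'_mem hA0
    have hx₀lt : ∀ y ∈ A, y ≠ x₀ → x₀ < y := by
      intro y hy hne
      exact lt_of_le_of_ne (A.min'_le y hy) (Ne.symm hne)
    set A' := A.erase x₀ with hA'def
    set S := P.powersetCard (e-1) with hSdef
    -- the classifying map
    set φ : ℕ → ({s // s ∈ S} → Fin (c+1)) :=
      fun y => fun s => ⟨min c (C (insert y (insert x₀ s.1))), by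
        have := Nat.min_le_left c (C (insert y (insert x₀ s.1))); omega⟩ with hφdef
    have huniv : (Finset.univ : Finset ({s // s ∈ S} → Fin (c+1))).card
        = (c+1)^(P.card.choose (e-1)) := by
      rw [Finset.card_univ, Fintype.card_fun, Fintype.card_fin, Fintype.card_coe,
        Finset.card_powersetCard]
    have hA'card : (c+1)^(P.card.choose (e-1)) * gfun c e (P.card+1) n ≤ A'.card := by
      have : A'.card = A.card - 1 := Finset.card_erase_of_mem hx₀A
      simp only [gfun] at hcard
      omega
    obtain ⟨v, -, hv⟩ := Finset.exists_le_card_fiber_of_mul_le_card_of_maps_to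
      (fun a _ => Finset.mem_univ (φ a)) Finset.univ_nonempty (huniv ▸ hA'card)
    set A'' := A'.filter (fun y => φ y = v) with hA''def
    have hA''sub : A'' ⊆ A' := Finset.filter_subset _ _
    have hA''subA : A'' ⊆ A := hA''sub.trans (Finset.erase_subset _ _)
    have hx₀nA'' : x₀ ∉ A'' := fun h => (Finset.mem_erase.mp (hA''sub h)).1 rfl
    have hx₀gt : ∀ y ∈ A'', x₀ < y := by
      intro y hy
      exact hx₀lt y (hA''subA hy) (fun h => hx₀nA'' (h ▸ hy))
    have hx₀nP : x₀ ∉ P := fun h => lt_irrefl x₀ (hord x₀ h x₀ hx₀A)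
    -- C-values on relevant sets are ≤ c
    have hCle : ∀ (y : ℕ) (s : Finset ℕ), y ∈ A → s ⊆ P → s.card = e → C (insert y s) ≤ c := by
      intro y s hy hsP hse
      apply hC _ _ _
      · intro u hu
        rcases Finset.mem_insert.mp hu with h | h
        · exact h ▸ hAW hy
        · exact hPW (hsP h)
      · rw [Finset.card_insert_of_notMem, hse]
        intro hy'
        exact lt_irrefl y (hord y (hsP hy') y hy)
    -- invariant for the extended prefix
    have hinv' : ∀ s ⊆ insert x₀ P, s.card = e →
        ∀ y ∈ A'', ∀ z ∈ A'', C (insert y s) = C (insert z s) := by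
      intro s hs hse y hy z hz
      by_cases hx₀s : x₀ ∈ s
      · set s' := s.erase x₀ with hs'def
        have hs'P : s' ⊆ P := by
          intro u hu
          have h1 := Finset.mem_erase.mp hu
          rcases Finset.mem_insert.mp (hs h1.2) with h | h
          · exact absurd h h1.1
          · exact h
        have hs'card : s'.card = e - 1 := by
          rw [Finset.card_erase_of_mem hx₀s, hse]
        have hs'S : s' ∈ S := Finset.mem_powersetCard.mpr ⟨hs'P, hs'card⟩
        have h1 : insert x₀ s' = s := Finset.insert_erase hx₀s
        have hyv : φ y = v := (Finset.mem_filter.mp hy).2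
        have hzv : φ z = v := (Finset.mem_filter.mp hz).2
        have heq := congrFun (hyv.trans hzv.symm) ⟨s', hs'S⟩
        simp only [hφdef, Fin.mk.injEq] at heq
        have hsP' : s ⊆ insert x₀ P := hs
        have hsW : ∀ u ∈ s, u ∈ W := by
          intro u hu
          rcases Finset.mem_insert.mp (hs hu) with h | h
          · exact h ▸ hAW hx₀A
          · exact hPW h
        have hys : y ∉ s := by
          intro hy'
          rcases Finset.mem_insert.mp (hs hy') with h | h
          · exact hx₀nA'' (h ▸ hy)
          · exact lt_irrefl y (hord y h y (hA''subA hy))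
        have hzs : z ∉ s := by
          intro hz'
          rcases Finset.mem_insert.mp (hs hz') with h | h
          · exact hx₀nA'' (h ▸ hz)
          · exact lt_irrefl z (hord z h z (hA''subA hz))
        have hCy : C (insert y s) ≤ c := by
          apply hC _ _ _
          · intro u hu
            rcases Finset.mem_insert.mp hu with h | h
            · exact h ▸ hAW (hA''subA hy)
            · exact hsW u h
          · rw [Finset.card_insert_of_notMem hys, hse]
        have hCz : C (insert z s) ≤ c := by
          apply hC _ _ _
          · intro u hu
            rcases Finset.mem_insert.mp hu with h | h
            · exact h ▸ hAW (hA''subA hz)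
            · exact hsW u h
          · rw [Finset.card_insert_of_notMem hzs, hse]
        rw [h1] at heq
        rw [Nat.min_eq_right hCy, Nat.min_eq_right hCz] at heq
        exact heq
      · have hsP : s ⊆ P := by
          intro u hu
          rcases Finset.mem_insert.mp (hs hu) with h | h
          · exact absurd (h ▸ hu) hx₀s
          · exact h
        exact hinv s hsP hse y (hA''subA hy) z (hA''subA hz)
    have hcard' : gfun c e ((insert x₀ P).card) n ≤ A''.card := by
      rw [Finset.card_insert_of_notMem hx₀nP]
      exact le_trans (le_of_eq rfl) (le_trans (le_of_eq rfl) hv)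
    obtain ⟨T', hT'A'', hT'card, hΦ'⟩ := ih (insert x₀ P) A''
      (by intro u hu; rcases Finset.mem_insert.mp hu with h | h
          · exact h ▸ hAW hx₀A
          · exact hPW h)
      (hA''subA.trans hAW)
      (by intro p hp y hy
          rcases Finset.mem_insert.mp hp with h | h
          · exact h ▸ hx₀gt y hy
          · exact hord p h y (hA''subA hy))
      hinv' hcard'
    have hT'A : T' ⊆ A := hT'A''.trans hA''subA
    have hx₀nT' : x₀ ∉ T' := fun h => hx₀nA'' (hT'A'' h)
    refine ⟨insert x₀ T', ?_, ?_, ?_⟩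
    · intro u hu
      rcases Finset.mem_insert.mp hu with h | h
      · exact h ▸ hx₀A
      · exact hT'A h
    · rw [Finset.card_insert_of_notMem hx₀nT', hT'card]
    · intro s hs hse x hx y hy hxgt hygt
      have hsplit : P ∪ insert x₀ T' = insert x₀ P ∪ T' := by
        rw [Finset.union_insert, Finset.insert_union]
      -- key: handle the case x = x₀ or y = x₀
      have hkey : ∀ z ∈ insert x₀ T', (∀ u ∈ s, u < z) →
          C (insert z s) = C (insert x₀ s) ∨ (s ⊆ insert x₀ P ∪ T') := by
        intro z _ _; right; rw [← hsplit]; exact hs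
      rcases Finset.mem_insert.mp hx with hxx | hxT' <;>
        rcases Finset.mem_insert.mp hy with hyy | hyT'
      · rw [hxx, hyy]
      · -- x = x₀, y ∈ T' : s ⊆ P
        subst hxx
        have hsP : s ⊆ P := by
          intro u hu
          have hu2 := hs hu
          rcases Finset.mem_union.mp hu2 with h | h
          · exact h
          · rcases Finset.mem_insert.mp h with h' | h'
            · exact absurd (h' ▸ hxgt u hu) (lt_irrefl u)
            · exact absurd (hxgt u hu) (not_lt.mpr (le_of_lt (hx₀gt u (hT'A'' h'))))
        exact hinv s hsP hse x₀ hx₀A y (hT'A hyT')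
      · -- y = x₀, x ∈ T'
        subst hyy
        have hsP : s ⊆ P := by
          intro u hu
          have hu2 := hs hu
          rcases Finset.mem_union.mp hu2 with h | h
          · exact h
          · rcases Finset.mem_insert.mp h with h' | h'
            · exact absurd (h' ▸ hygt u hu) (lt_irrefl u)
            · exact absurd (hygt u hu) (not_lt.mpr (le_of_lt (hx₀gt u (hT'A'' h'))))
        exact hinv s hsP hse x (hT'A hxT') x₀ hx₀A
      · -- x, y ∈ T'
        apply hΦ' s (hsplit ▸ hs) hse x hxT' y hyT' hxgt hygt

lemma minhom (c : ℕ) : ∀ (dd : ℕ), 1 ≤ dd → ∀ (m : ℕ) (W : Finset ℕ) (C : Finset ℕ → ℕ),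
    (∀ s ⊆ W, s.card = dd → C s ≤ c) → Bnd c m dd ≤ W.card →
    ∃ H : Finset ℕ, H ⊆ W ∧ H.card = m ∧
      ∀ s ⊆ H, ∀ t ⊆ H, s.card = dd → t.card = dd →
        sInf (s : Set ℕ) = sInf (t : Set ℕ) → C s = C t := by
  intro dd
  induction dd with
  | zero => omega
  | succ e ih =>
    intro _ m W C hC hcard
    match e, ih with
    | 0, _ =>
      -- dimension 1
      obtain ⟨H, hHW, hHcard⟩ := Finset.exists_subset_card_eq (show m ≤ W.card from hcard)
      refine ⟨H, hHW, hHcard, ?_⟩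
      intro s hs t ht hscard htcard hinf
      obtain ⟨x, rfl⟩ := Finset.card_eq_one.mp hscard
      obtain ⟨y, rfl⟩ := Finset.card_eq_one.mp htcard
      simp only [Finset.coe_singleton, csInf_singleton] at hinf
      rw [hinf]
    | (j+1), ih =>
      have ihj := ih (by omega) m
      set e := j + 1 with hedef
      -- dimension e + 1 ≥ 2
      have hBnd : Bnd c m (e+1) = gfun c e 0 (Bnd c m e + 1) := rfl
      obtain ⟨T, hTW, hTcard, hΦ⟩ := prehom c e (by omega) C W hC (Bnd c m e + 1) ∅ W
        (Finset.empty_subset _) (le_refl W)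
        (by intro p hp; simp at hp)
        (by intro s hs hse
            have : s = ∅ := Finset.subset_empty.mp hs
            simp [this] at hse)
        (by simpa using hBnd ▸ hcard)
      have hTne : T.Nonempty := by
        rw [← Finset.card_pos, hTcard]; omega
      set top := T.max' hTne with htopdef
      have htopT : top ∈ T := T.max'_mem hTne
      set T₀ := T.erase top with hT₀def
      have hT₀T : T₀ ⊆ T := Finset.erase_subset _ _
      have hT₀card : T₀.card = Bnd c m e := by
        rw [hT₀def, Finset.card_erase_of_mem htopT, hTcard]; omega
      have hlttop : ∀ u ∈ T₀, u < top := by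
        intro u hu
        have h := Finset.mem_erase.mp hu
        exact lt_of_le_of_ne (T.le_max' u h.2) h.1
      set C' : Finset ℕ → ℕ := fun u => C (insert top u) with hC'def
      have hC' : ∀ u ⊆ T₀, u.card = e → C' u ≤ c := by
        intro u hu hue
        apply hC _ _ _
        · intro v hv
          rcases Finset.mem_insert.mp hv with h | h
          · exact h ▸ hTW htopT
          · exact hTW (hT₀T (hu h))
        · rw [Finset.card_insert_of_notMem, hue]
          intro h
          exact lt_irrefl top (hlttop top (hu h))
      obtain ⟨H, hHT₀, hHcard, hmin⟩ := ihj T₀ C' hC' (le_of_eq hT₀card.symm)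
      have hHT : H ⊆ T := hHT₀.trans hT₀T
      refine ⟨H, hHT.trans hTW, hHcard, ?_⟩
      -- reduce a (e+1)-set inside H to its erase-max together with C'
      have hred : ∀ s ⊆ H, s.card = e + 1 →
          ∃ s₀ ⊆ H, s₀.card = e ∧ C s = C' s₀ ∧ sInf (s₀ : Set ℕ) = sInf (s : Set ℕ) := by
        intro s hsH hse
        have hsne : s.Nonempty := by rw [← Finset.card_pos, hse]; omega
        set xs := s.max' hsne with hxsdef
        have hxs : xs ∈ s := s.max'_mem hsne
        set s₀ := s.erase xs with hs₀def
        have hs₀s : s₀ ⊆ s := Finset.erase_subset _ _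
        have hs₀card : s₀.card = e := by
          rw [hs₀def, Finset.card_erase_of_mem hxs, hse]; omega
        have hins : insert xs s₀ = s := Finset.insert_erase hxs
        have hlt : ∀ u ∈ s₀, u < xs := by
          intro u hu
          have h := Finset.mem_erase.mp hu
          exact lt_of_le_of_ne (s.le_max' u h.2) h.1
        have hs₀T : s₀ ⊆ ∅ ∪ T := by
          rw [Finset.empty_union]
          exact (hs₀s.trans hsH).trans hHT
        have hlt2 : ∀ u ∈ s₀, u < top := fun u hu => hlttop u (hHT₀ (hsH (hs₀s hu)))
        have heq1 : C (insert xs s₀) = C (insert top s₀) :=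
          hΦ s₀ hs₀T hs₀card xs (hHT (hsH hxs)) top htopT hlt hlt2
        -- sInf equality
        have h2 : 1 < s.card := by omega
        have hminlt := Finset.min'_lt_max'_of_card s h2
        have hminmem : s.min' hsne ∈ s₀ := by
          rw [hs₀def, Finset.mem_erase]
          exact ⟨ne_of_lt hminlt, s.min'_mem hsne⟩
        have hs₀ne : s₀.Nonempty := ⟨_, hminmem⟩
        have hmineq : s₀.min' hs₀ne = s.min' hsne := by
          apply le_antisymm
          · exact s₀.min'_le _ hminmem
          · exact s.min'_le _ (hs₀s (s₀.min'_mem hs₀ne))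
        refine ⟨s₀, hs₀s.trans hsH, hs₀card, ?_, ?_⟩
        · rw [← hins, heq1]
        · rw [hs₀ne.csInf_eq_min', hsne.csInf_eq_min', hmineq]
      intro s hs t ht hscard htcard hinf
      obtain ⟨s₀, hs₀H, hs₀c, hCs, hIs⟩ := hred s hs hscard
      obtain ⟨t₀, ht₀H, ht₀c, hCt, hIt⟩ := hred t ht htcard
      rw [hCs, hCt]
      exact hmin s₀ hs₀H t₀ ht₀H hs₀c ht₀c (by rw [hIs, hIt, hinf])

lemma two_mul_le_two_pow {k : ℕ} (hk : 1 ≤ k) : 2*k ≤ 2^k := by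
  induction k with
  | zero => omega
  | succ i ihi =>
    rcases Nat.eq_or_lt_of_le hk with h | h
    · simp [← h]
    · have h1 : 1 ≤ i := by omega
      have := ihi h1
      have h2 : (2:ℕ)^i ≥ 2 := by
        calc (2:ℕ) = 2*1 := by ring
        _ ≤ 2*i := by omega
        _ ≤ 2^i := this
      rw [pow_succ]
      omega

lemma towA (K : ℕ) : ∀ (h x y : ℕ), x + K ≤ y → tower h x + K ≤ tower h y := by
  intro h
  induction h with
  | zero => intro x y hxy; simpa [tower] using hxy
  | succ i ihi =>
    intro x y hxy
    simp only [tower]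
    have h1 : tower i x + K ≤ tower i y := ihi x y hxy
    calc 2 ^ tower i x + K ≤ 2 ^ tower i x * 2 ^ K := by
          have hK : K + 1 ≤ 2^K := Nat.lt_two_pow_self (n := K)
          have h2 : 1 ≤ 2 ^ tower i x := Nat.one_le_two_pow
          calc 2 ^ tower i x + K ≤ 2 ^ tower i x + K * 2 ^ tower i x := by nlinarith
          _ = 2 ^ tower i x * (K + 1) := by ring
          _ ≤ 2 ^ tower i x * 2 ^ K := Nat.mul_le_mul_left _ hK
      _ = 2 ^ (tower i x + K) := by rw [pow_add]
      _ ≤ 2 ^ tower i y := Nat.pow_le_pow_right (by norm_num) h1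
lemma towB (K : ℕ) (hK : 1 ≤ K) : ∀ (h x y : ℕ), K*x + K ≤ y →
    K * tower h x + K ≤ tower h y := by
  intro h
  induction h with
  | zero => intro x y hxy; simpa [tower] using hxy
  | succ i ihi =>
    intro x y hxy
    simp only [tower]
    have hxK : x + K ≤ y := by nlinarith
    have h1 : tower i x + K ≤ tower i y := towA K i x y hxK
    calc K * 2 ^ tower i x + K ≤ 2 ^ tower i x * 2 ^ K := by
          have hK2 : 2*K ≤ 2^K := two_mul_le_two_pow hK
          have h2 : 1 ≤ 2 ^ tower i x := Nat.one_le_two_pow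
          calc K * 2 ^ tower i x + K ≤ K * 2 ^ tower i x + K * 2 ^ tower i x := by nlinarith
          _ = (2*K) * 2 ^ tower i x := by ring
          _ ≤ 2^K * 2 ^ tower i x := Nat.mul_le_mul_right _ hK2
          _ = 2 ^ tower i x * 2 ^ K := by ring
      _ = 2 ^ (tower i x + K) := by rw [pow_add]
      _ ≤ 2 ^ tower i y := Nat.pow_le_pow_right (by norm_num) h1

lemma pow_succ_aux (k : ℕ) : ∀ n, (k+1)^n * (k-n) ≤ k^(n+1) := by
  intro n
  induction n with
  | zero => simpa using Nat.sub_le k 0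
  | succ i ihi =>
    have key : (k+1) * (k - (i+1)) ≤ k * (k - i) := by
      rcases Nat.le_total (i+1) k with h | h
      · cases' Nat.exists_eq_add_of_le h with j hj
        subst hj
        have e1 : i + 1 + j - (i+1) = j := by omega
        have e2 : i + 1 + j - i = j + 1 := by omega
        rw [e1, e2]
        nlinarith
      · have : k - (i+1) = 0 := by omega
        simp [this]
    calc (k+1)^(i+1) * (k - (i+1)) = (k+1)^i * ((k+1) * (k - (i+1))) := by ring
      _ ≤ (k+1)^i * (k * (k-i)) := Nat.mul_le_mul_left _ key
      _ = ((k+1)^i * (k-i)) * k := by ring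
      _ ≤ k^(i+1) * k := Nat.mul_le_mul_right _ ihi
      _ = k^(i+2) := by ring

lemma succ_pow_le (k n : ℕ) (h : 2*n ≤ k) : (k+1)^n ≤ 2*k^n := by
  have h1 := pow_succ_aux k n
  have h2 : k ≤ 2*(k-n) := by omega
  have h3 : k * (k+1)^n ≤ k * (2*k^n) := by
    calc k * (k+1)^n ≤ (2*(k-n)) * (k+1)^n := Nat.mul_le_mul_right _ h2
      _ = 2 * ((k+1)^n * (k-n)) := by ring
      _ ≤ 2 * k^(n+1) := by omega
      _ = k * (2*k^n) := by ring
  rcases Nat.eq_zero_or_pos k with h0 | h0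
  · subst h0
    have : n = 0 := by omega
    subst this; simp
  · exact Nat.le_of_mul_le_mul_left h3 h0

lemma gfun_le (c e : ℕ) (he : 1 ≤ e) : ∀ n p, gfun c e p n ≤ (2*(c+1))^(n * (p+n)^(e-1)) := by
  intro n
  induction n with
  | zero => intro p; simp [gfun]
  | succ i ihi =>
    intro p
    have hE1 : 1 ≤ (p + (i+1))^(e-1) := Nat.one_le_pow _ _ (by omega)
    have hch : p.choose (e-1) ≤ (p + (i+1))^(e-1) := by
      calc p.choose (e-1) ≤ p^(e-1) := Nat.choose_le_pow _ _
        _ ≤ (p + (i+1))^(e-1) := Nat.pow_le_pow_left (by omega) _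
    set E := (p + (i+1))^(e-1) with hEdef
    have step1 : gfun c e p (i+1) = 1 + (c+1)^(p.choose (e-1)) * gfun c e (p+1) i := rfl
    have hIH : gfun c e (p+1) i ≤ (2*(c+1))^(i * E) := by
      have := ihi (p+1)
      have harg : (p+1) + i = p + (i+1) := by omega
      rwa [harg] at this
    have hX : 1 ≤ (2*(c+1))^(i*E) := Nat.one_le_pow _ _ (by omega)
    calc gfun c e p (i+1) = 1 + (c+1)^(p.choose (e-1)) * gfun c e (p+1) i := step1
      _ ≤ 1 + (c+1)^E * (2*(c+1))^(i*E) := by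
          have h1 : (c+1)^(p.choose (e-1)) ≤ (c+1)^E := Nat.pow_le_pow_right (by omega) hch
          have := Nat.mul_le_mul h1 hIH
          omega
      _ ≤ (2*(c+1))^E * (2*(c+1))^(i*E) := by
          have hy : 1 ≤ (c+1)^E := Nat.one_le_pow _ _ (by omega)
          have h1 : 1 ≤ (c+1)^E * (2*(c+1))^(i*E) := Nat.one_le_of_lt (by positivity)
          have h2 : 2*(c+1)^E ≤ (2*(c+1))^E := by
            rw [mul_pow]
            have h3 : 2 ≤ 2^E := by
              calc (2:ℕ) = 2^1 := by norm_num
              _ ≤ 2^E := Nat.pow_le_pow_right (by norm_num) hE1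
            exact Nat.mul_le_mul_right _ h3
          calc 1 + (c+1)^E * (2*(c+1))^(i*E)
              ≤ (c+1)^E * (2*(c+1))^(i*E) + (c+1)^E * (2*(c+1))^(i*E) := by omega
            _ = (2*(c+1)^E) * (2*(c+1))^(i*E) := by ring
            _ ≤ (2*(c+1))^E * (2*(c+1))^(i*E) := Nat.mul_le_mul_right _ h2
      _ = (2*(c+1))^(E + i*E) := by rw [← pow_add]
      _ = (2*(c+1))^((i+1) * E) := by ring_nf
lemma gfun1_le (c : ℕ) : ∀ n p, c * gfun c 1 p n + 1 ≤ (c+1)^n := by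
  intro n
  induction n with
  | zero => intro p; simp [gfun]
  | succ i ihi =>
    intro p
    have h := ihi (p+1)
    have h0 : gfun c 1 p (i+1) = 1 + (c+1)^(p.choose 0) * gfun c 1 (p+1) i := rfl
    rw [Nat.choose_zero_right, pow_one] at h0
    calc c * gfun c 1 p (i+1) + 1 = (c+1) + (c+1) * (c * gfun c 1 (p+1) i) := by rw [h0]; ring
      _ ≤ (c+1) + (c+1) * ((c+1)^i - 1) := by
          have : c * gfun c 1 (p+1) i ≤ (c+1)^i - 1 := by omega
          have := Nat.mul_le_mul_left (c+1) this
          omega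
      _ = (c+1) * (1 + ((c+1)^i - 1)) := by ring
      _ = (c+1)^(i+1) := by
          have h1 : 1 ≤ (c+1)^i := Nat.one_le_pow _ _ (by omega)
          rw [pow_succ]
          have : 1 + ((c+1)^i - 1) = (c+1)^i := by omega
          rw [this]; ring

lemma bnd2_le (k m : ℕ) (hk : 2*(m+1) ≤ k) : Bnd k m 2 ≤ k^(m+2) := by
  have h1 : Bnd k m 2 = gfun k 1 0 (m+1) := rfl
  have h2 := gfun1_le k (m+1) 0
  have hk2 : 2 ≤ k := by omega
  have h3 : Bnd k m 2 ≤ (k+1)^(m+1) := by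
    rw [h1]
    have : gfun k 1 0 (m+1) ≤ k * gfun k 1 0 (m+1) := Nat.le_mul_of_pos_left _ (by omega)
    omega
  calc Bnd k m 2 ≤ (k+1)^(m+1) := h3
    _ ≤ 2*k^(m+1) := succ_pow_le k (m+1) hk
    _ ≤ k * k^(m+1) := Nat.mul_le_mul_right _ hk2
    _ = k^(m+2) := by ring

lemma pow_mono_exp {k a b : ℕ} (hk : 1 ≤ k) (h : a ≤ b) : k^a ≤ k^b :=
  Nat.pow_le_pow_right hk h

lemma bnd_le (k m : ℕ) (hm : 1 ≤ m) :
    ∀ d, 2 ≤ d → d^2*m + 2 ≤ k → Bnd k m d ≤ tower (d-2) (k^(d^2*m)) := by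
  refine Nat.le_induction ?_ ?_
  · -- base d = 2
    intro hk
    have hk4 : 4*m + 2 ≤ k := by nlinarith
    have h1 : Bnd k m 2 ≤ k^(m+2) := bnd2_le k m (by omega)
    have h2 : k^(m+2) ≤ k^(2^2*m) := pow_mono_exp (by omega) (by nlinarith)
    simpa [tower] using h1.trans h2
  · -- step d → d+1, d ≥ 2
    intro d hd ih hk'
    have hk : d^2*m + 2 ≤ k := by nlinarith
    have hkd : d^2*m ≤ k := by omega
    have hk3 : 3 ≤ k := by nlinarith
    obtain ⟨j, rfl⟩ : ∃ j, d = j + 2 := ⟨d-2, by omega⟩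
    set B := Bnd k m (j+2) with hBdef
    set n := B + 1 with hndef
    have hstep : Bnd k m (j+3) = gfun k (j+2) 0 n := rfl
    have hg : gfun k (j+2) 0 n ≤ (2*(k+1))^(n * (0+n)^(j+1)) := gfun_le k (j+2) (by omega) n 0
    have hexp : n * (0+n)^(j+1) = n^(j+2) := by
      rw [Nat.zero_add, ← pow_succ']
    rw [hexp] at hg
    have h2k : 2*(k+1) ≤ k^2 := by nlinarith
    have hkk : k ≤ 2^k := le_of_lt (Nat.lt_two_pow_self (n := k))
    have h3 : Bnd k m (j+3) ≤ 2^(2*k*n^(j+2)) := by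
      calc Bnd k m (j+3) ≤ (2*(k+1))^(n^(j+2)) := hstep ▸ hg
        _ ≤ (k^2)^(n^(j+2)) := Nat.pow_le_pow_left h2k _
        _ ≤ ((2^k)^2)^(n^(j+2)) := Nat.pow_le_pow_left (Nat.pow_le_pow_left hkk 2) _
        _ = 2^(2*k*n^(j+2)) := by rw [← pow_mul, ← pow_mul]; ring_nf
    -- suffices to bound the exponent by tower (j) (k^((j+3)^2*m))
    have goalred : 2*k*n^(j+2) ≤ tower j (k^((j+3)^2*m)) → 
        Bnd k m (j+3) ≤ tower (j+3-2) (k^((j+3)^2*m)) := by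
      intro h
      have : tower (j+1) (k^((j+3)^2*m)) = 2^(tower j (k^((j+3)^2*m))) := rfl
      have h4 : (2:ℕ)^(2*k*n^(j+2)) ≤ 2^(tower j (k^((j+3)^2*m))) :=
        Nat.pow_le_pow_right (by norm_num) h
      calc Bnd k m (j+3) ≤ 2^(2*k*n^(j+2)) := h3
        _ ≤ tower (j+1) (k^((j+3)^2*m)) := this ▸ h4
    apply goalred
    cases j with
    | zero =>
      -- d = 2 case: everything at ground level
      simp only [tower]
      have hB : B ≤ k^(m+2) := bnd2_le k m (by nlinarith)
      have hn : n ≤ 2*k^(m+2) := by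
        have : 1 ≤ k^(m+2) := Nat.one_le_pow _ _ (by omega)
        omega
      have h5 : n^2 ≤ 4*k^(2*m+4) := by
        calc n^2 ≤ (2*k^(m+2))^2 := Nat.pow_le_pow_left hn 2
          _ = 4*k^(2*m+4) := by rw [mul_pow, ← pow_mul]; ring_nf
      calc 2*k*n^(0+2) ≤ 2*k*(4*k^(2*m+4)) := by
            have : n^(0+2) = n^2 := by norm_num
            rw [this]
            exact Nat.mul_le_mul_left _ h5
        _ = 8 * k^(2*m+5) := by
            rw [show (2:ℕ)*m+5 = (2*m+4)+1 from by omega, pow_succ]; ring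
        _ ≤ k^2 * k^(2*m+5) := by
            have : 8 ≤ k^2 := by nlinarith
            exact Nat.mul_le_mul_right _ this
        _ = k^(2*m+7) := by rw [← pow_add]; congr 1; omega
        _ ≤ k^((0+3)^2*m) := pow_mono_exp (by omega) (by nlinarith)
    | succ i =>
      -- d = i + 3 ≥ 3
      have hih : B ≤ tower (i+1) (k^((i+3)^2*m)) := by
        have h6 : (i+3)^2*m + 2 ≤ k := by nlinarith
        have := ih h6
        simpa using this
      set x := k^((i+3)^2*m) with hxdef
      set y := k^((i+4)^2*m) with hydef
      set t := tower i x with htdef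
      have htow : tower (i+1) x = 2^t := rfl
      have hn2 : n ≤ 2^(t+1) := by
        have h7 : 1 ≤ 2^t := Nat.one_le_two_pow
        have : B ≤ 2^t := htow ▸ hih
        calc n = B + 1 := rfl
          _ ≤ 2^t + 2^t := by omega
          _ = 2^(t+1) := by rw [pow_succ]; ring
      set K := k + i + 3 with hKdef
      have hksq : 9 ≤ k^2 := by
        calc (9:ℕ) = 3*3 := by norm_num
          _ ≤ k*k := Nat.mul_le_mul hk3 hk3
          _ = k^2 := (sq k).symm
      have hKx : K*x + K ≤ y := by
        have hi3 : i + 3 ≤ k := by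
          have h9 : 1*1 ≤ (i+3)*m := Nat.mul_le_mul (by omega) hm
          have h9' : (i+3)*1 ≤ (i+3)*((i+3)*m) := Nat.mul_le_mul_left _ (by linarith)
          have h10 : (i+3)*((i+3)*m) = (i+3)^2*m := by ring
          have h11 : (i+3)^2*m ≤ k := hkd
          linarith
        have hK2k : K ≤ 2*k := by omega
        have hx1 : 1 ≤ x := Nat.one_le_pow _ _ (by omega)
        have hKK : K ≤ 2*k*x := by
          calc K ≤ 2*k := hK2k
            _ = 2*k*1 := by ring
            _ ≤ 2*k*x := Nat.mul_le_mul_left _ hx1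
        have hKxx : K*x ≤ 2*k*x := Nat.mul_le_mul_right _ hK2k
        calc K*x + K ≤ 2*k*x + 2*k*x := Nat.add_le_add hKxx hKK
          _ = 4*(k*x) := by ring
          _ ≤ k^2*(k*x) := Nat.mul_le_mul_right _ (by omega)
          _ = k^((i+3)^2*m + 3) := by rw [hxdef]; ring
          _ ≤ y := by
              apply pow_mono_exp (by omega)
              have e1 : (i+4)^2*m = (i+3)^2*m + (2*i+7)*m := by ring
              have e2 : (2*i+7)*1 ≤ (2*i+7)*m := Nat.mul_le_mul_left _ hm
              linarith
      have hKt : K * tower i x + K ≤ tower i y := towB K (by omega) i x y hKx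
      have hexp2 : 2*k*n^(i+3) ≤ tower (i+1) y := by
        calc 2*k*n^(i+3) ≤ 2*k*(2^(t+1))^(i+3) := Nat.mul_le_mul_left _ (Nat.pow_le_pow_left hn2 _)
          _ = 2*k*2^((t+1)*(i+3)) := by rw [← pow_mul]
          _ ≤ 2^k * 2^((t+1)*(i+3)) := Nat.mul_le_mul_right _ (two_mul_le_two_pow (by omega))
          _ = 2^(k + (t+1)*(i+3)) := by rw [← pow_add]
          _ ≤ 2^(K*t + K) := by
              apply Nat.pow_le_pow_right (by norm_num)
              have h11 : (t+1)*(i+3) = (i+3)*t + (i+3) := by ring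
              rw [h11]
              have h8 : (i+3)*t ≤ K*t := Nat.mul_le_mul_right _ (by omega)
              omega
          _ ≤ 2^(tower i y) := Nat.pow_le_pow_right (by norm_num) hKt
          _ = tower (i+1) y := rfl
      exact hexp2


/-- Upper bounds for the Kanamori–McAloon function with constant parameter:
`KM^d_k(a,m) ≤ 2_{d-2}(k^{d²·m}) + a ≤ 2_{d-2}(k^{d²·m+2})` for `k ≥ a + d²·m + 2`. -/
theorem KM_constant_upper_bound (d a m k : ℕ) (hd : 2 ≤ d) (hm : 1 ≤ m)
    (hk : a + d^2 * m + 2 ≤ k) :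
    KMnum (fun _ => k) d a m ≤ tower (d-2) (k^(d^2 * m)) + a ∧
    tower (d-2) (k^(d^2 * m)) + a ≤ tower (d-2) (k^(d^2 * m + 2)) := by
  have hd2m : 4 ≤ d^2*m := by
    have h1 : 4 ≤ d^2 := by nlinarith
    calc 4 = 4*1 := by ring
      _ ≤ d^2*m := Nat.mul_le_mul h1 hm
  have hk6 : 6 ≤ k := by linarith
  have hkdm : d^2*m + 2 ≤ k := by linarith
  have hx1 : 1 ≤ k^(d^2*m) := Nat.one_le_pow _ _ (by omega)
  constructor
  · apply Nat.sInf_le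
    show KMProp (fun _ => k) d a m (tower (d-2) (k^(d^2 * m)) + a)
    intro C hC
    have hb := bnd_le k m hm d hd hkdm
    have hcard : Bnd k m d ≤ (Finset.Icc a (tower (d-2) (k^(d^2 * m)) + a)).card := by
      rw [Nat.card_Icc]
      rw [show tower (d-2) (k^(d^2 * m)) + a + 1 = (tower (d-2) (k^(d^2 * m)) + 1) + a from by ring,
        Nat.add_sub_cancel]
      exact le_trans hb (Nat.le_succ _)
    obtain ⟨H, h1, h2, h3⟩ := minhom k d (by omega) m _ C (fun s hs hc => hC s hs hc) hcard
    exact ⟨H, h1, h2, h3⟩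
  · apply towA a (d-2)
    have ha : a ≤ k := by linarith
    have h2 : k^(d^2*m) + a ≤ k^(d^2*m) * (1 + k) := by
      have h3 : a ≤ k * k^(d^2*m) := by
        calc a ≤ k := ha
          _ = k*1 := by ring
          _ ≤ k * k^(d^2*m) := Nat.mul_le_mul_left _ hx1
      calc k^(d^2*m) + a ≤ k^(d^2*m) + k*k^(d^2*m) := by omega
        _ = k^(d^2*m) * (1+k) := by ring
    have h4 : k^(d^2*m) * (1+k) ≤ k^(d^2*m) * (k*k) := by
      apply Nat.mul_le_mul_left
      nlinarith
    calc k^(d^2*m) + a ≤ k^(d^2*m) * (k*k) := h2.trans h4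
      _ = k^(d^2*m + 2) := by ring
end
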